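/- arXiv:1112.4541 — 3 statements merged into one kernel-verified Lean document; each statement's English description precedes it below -/
import Mathlib

section
/- Let $\mu$ be a Borel probability measure supported on a Borel set $F \subseteq \mathbb{R}^n$ and let $\lambda \in (0,\infty)$. If $\liminf_{r \to 0} \mu(B(x,r))\, r^{-s} \geq \lambda$ for all $x \in F$, then the packing measure satisfies $\mathcal{P}^s(F) \leq \lambda^{-1} 2^s$. -/
open Metric MeasureTheory Filter Set Topology
open scoped ENNReal NNReal

/-- Packing pre-measure with respect to the gauge `G` (applied to the diameters `2r`
of the balls of a countable centred `δ`-packing), as `δ → 0`. -/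
noncomputable def packingPre {K : Type*} [MetricSpace K] (G : ℝ → ℝ) (F : Set K) : ℝ≥0∞ :=
  ⨅ (δ : ℝ) (_ : 0 < δ),
    ⨆ (s : Set ℕ) (c : ℕ → K) (r : ℕ → ℝ)
      (_ : ∀ n ∈ s, c n ∈ F ∧ 0 < r n ∧ 2 * r n ≤ δ)
      (_ : s.PairwiseDisjoint fun n => Metric.closedBall (c n) (r n)),
      ∑' n : s, ENNReal.ofReal (G (2 * r n))

/-- Packing measure with respect to the gauge `G`. -/
noncomputable def packingMeasure {K : Type*} [MetricSpace K] (G : ℝ → ℝ) (F : Set K) : ℝ≥0∞ :=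
  ⨅ (E : ℕ → Set K) (_ : F ⊆ ⋃ n, E n), ∑' n, packingPre G (E n)

/-- Packing dimension, defined from the packing measures `𝒫^s`. -/
noncomputable def packingDim {K : Type*} [MetricSpace K] (F : Set K) : ℝ≥0∞ :=
  ⨆ (s : ℝ) (_ : 0 ≤ s) (_ : packingMeasure (fun t => t ^ s) F = ⊤), ENNReal.ofReal s



set_option maxHeartbeats 1000000

lemma aux_limit {lam s r : ℝ} (hr : 0 < r) {X : ℝ≥0∞}
    (hX : ∀ r' : ℝ, 0 < r' → r' < r → ENNReal.ofReal (lam * r' ^ s) ≤ X) :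
    ENNReal.ofReal (lam * r ^ s) ≤ X := by
  obtain ⟨u, hu, hur, hlim⟩ := exists_seq_strictMono_tendsto r
  have h1 : Tendsto (fun i => ENNReal.ofReal (lam * u i ^ s)) atTop
      (𝓝 (ENNReal.ofReal (lam * r ^ s))) := by
    apply ENNReal.tendsto_ofReal
    exact ((Real.continuousAt_rpow_const r s (Or.inl hr.ne')).tendsto.comp hlim).const_mul lam
  refine le_of_tendsto h1 ?_
  filter_upwards [hlim.eventually (eventually_gt_nhds hr)] with i hi
  exact hX (u i) hi (hur i)

lemma lsc_ball {K : Type*} [MetricSpace K] [MeasurableSpace K] [OpensMeasurableSpace K]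
    (μ : Measure K) (q : ℝ) : Measurable (fun x => μ (ball x q)) := by
  apply LowerSemicontinuous.measurable
  intro x a ha
  rcases le_or_gt q 0 with hq | hq
  · simp [ball_eq_empty.2 hq] at ha
  obtain ⟨u, hu, hur, hlim⟩ := exists_seq_strictMono_tendsto q
  have hball : ball x q = ⋃ i, ball x (u i) := by
    ext z
    simp only [mem_ball, mem_iUnion]
    constructor
    · intro hz
      obtain ⟨i, hi⟩ := (hlim.eventually (eventually_gt_nhds hz)).exists
      exact ⟨i, hi⟩
    · rintro ⟨i, hi⟩; exact hi.trans (hur i)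
  have hdir : Directed (· ⊆ ·) (fun i => ball x (u i)) := fun i j =>
    ⟨max i j, ball_subset_ball (hu.monotone (le_max_left _ _)),
      ball_subset_ball (hu.monotone (le_max_right _ _))⟩
  have hsup : a < ⨆ i, μ (ball x (u i)) := by
    rw [← hdir.measure_iUnion, ← hball]; exact ha
  obtain ⟨i, hi⟩ := lt_iSup_iff.1 hsup
  have hui : u i < q := hur i
  filter_upwards [ball_mem_nhds x (show (0:ℝ) < q - u i by linarith)] with y hy
  refine hi.trans_le (measure_mono fun z hz => ?_)
  have : dist z y < q := by
    calc dist z y ≤ dist z x + dist x y := dist_triangle _ _ _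
    _ < u i + (q - u i) := by
        rw [mem_ball] at hz hy
        rw [dist_comm] at hy
        exact add_lt_add hz hy
    _ = q := by ring
  exact mem_ball.2 this

lemma G_measurable {K : Type*} [MetricSpace K] [MeasurableSpace K] [OpensMeasurableSpace K]
    (μ : Measure K) (lam s ρ : ℝ) (hlam : 0 ≤ lam) (hs : 0 ≤ s) :
    MeasurableSet {x : K | ∀ r : ℝ, 0 < r → r < ρ → ENNReal.ofReal (lam * r ^ s) ≤ μ (ball x r)} := by
  have : {x : K | ∀ r : ℝ, 0 < r → r < ρ → ENNReal.ofReal (lam * r ^ s) ≤ μ (ball x r)} =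
      ⋂ (q : ℚ) (_ : 0 < (q:ℝ) ∧ (q:ℝ) < ρ),
        {x : K | ENNReal.ofReal (lam * (q:ℝ) ^ s) ≤ μ (ball x (q:ℝ))} := by
    ext x
    simp only [mem_setOf_eq, mem_iInter]
    constructor
    · intro hx q hq
      exact hx q hq.1 hq.2
    · intro hx r hr hrρ
      refine aux_limit hr fun r' hr' hr'r => ?_
      obtain ⟨q, hq1, hq2⟩ := exists_rat_btwn hr'r
      calc ENNReal.ofReal (lam * r' ^ s) ≤ ENNReal.ofReal (lam * (q:ℝ) ^ s) := by
            apply ENNReal.ofReal_le_ofReal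
            exact mul_le_mul_of_nonneg_left (Real.rpow_le_rpow hr'.le hq1.le hs) hlam
        _ ≤ μ (ball x (q:ℝ)) := hx q ⟨hr'.trans hq1, hq2.trans hrρ⟩
        _ ≤ μ (ball x r) := measure_mono (ball_subset_ball hq2.le)
  rw [this]
  exact MeasurableSet.iInter fun q => MeasurableSet.iInter fun _ =>
    measurableSet_le measurable_const (lsc_ball μ _)

lemma packingPre_le {K : Type*} [MetricSpace K] [MeasurableSpace K] [OpensMeasurableSpace K]
    (μ : Measure K) [IsFiniteMeasure μ] (E : Set K) (s lam ρ : ℝ)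
    (hs : 0 ≤ s) (hlam : 0 < lam) (hρ : 0 < ρ)
    (hE : ∀ x ∈ E, ∀ r : ℝ, 0 < r → r < ρ → ENNReal.ofReal (lam * r ^ s) ≤ μ (ball x r)) :
    packingPre (· ^ s) E ≤ (ENNReal.ofReal lam)⁻¹ * ENNReal.ofReal (2 ^ s) * μ (closure E) := by
  set c : ℝ≥0∞ := (ENNReal.ofReal lam)⁻¹ * ENNReal.ofReal (2 ^ s) with hc
  have h2s : (0:ℝ) < 2 ^ s := Real.rpow_pos_of_pos two_pos s
  have hlam0 : ENNReal.ofReal lam ≠ 0 := by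
    simp [ENNReal.ofReal_eq_zero, not_le, hlam]
  have hc0 : c ≠ 0 := by
    apply mul_ne_zero
    · simp [ENNReal.inv_ne_zero]
    · simp [ENNReal.ofReal_eq_zero, not_le, h2s]
  have hctop : c ≠ ∞ := by
    apply ENNReal.mul_ne_top
    · simp [hlam0]
    · exact ENNReal.ofReal_ne_top
  apply ENNReal.le_of_forall_pos_le_add
  intro ε hε hfin
  have hεc : (0:ℝ≥0∞) < ε / c := ENNReal.div_pos (by exact_mod_cast hε.ne') hctop
  have htend := tendsto_measure_cthickening (μ := μ) (s := E) ⟨1, one_pos, measure_ne_top μ _⟩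
  have hlt2 : μ (closure E) < μ (closure E) + ε / c :=
    ENNReal.lt_add_right (measure_ne_top μ _) hεc.ne'
  have hev : ∀ᶠ δ in 𝓝[>] (0:ℝ), μ (cthickening δ E) < μ (closure E) + ε / c :=
    (htend.eventually_lt_const hlt2).filter_mono nhdsWithin_le_nhds
  have hev2 : ∀ᶠ δ in 𝓝[>] (0:ℝ), δ ∈ Ioo 0 ρ :=
    eventually_of_mem (Ioo_mem_nhdsGT hρ) fun x hx => hx
  obtain ⟨δ, hδth, hδ0, hδρ⟩ : ∃ δ : ℝ, μ (cthickening δ E) < μ (closure E) + ε / c ∧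
      0 < δ ∧ δ < ρ := by
    obtain ⟨δ, h1, h2⟩ := (hev.and hev2).exists
    exact ⟨δ, h1, h2.1, h2.2⟩
  have key : packingPre (· ^ s) E ≤ c * μ (cthickening δ E) := by
    refine le_trans (iInf_le_of_le (2 * δ) (iInf_le_of_le (by linarith) le_rfl)) ?_
    refine iSup_le fun p => iSup_le fun ctr => iSup_le fun rad => iSup_le fun hpack =>
      iSup_le fun hdisj => ?_
    have hdisj' : p.PairwiseDisjoint fun n => ball (ctr n) (rad n) :=
      hdisj.mono fun n => ball_subset_closedBall
    have hterm : ∀ n : p, ENNReal.ofReal ((2 * rad n) ^ s) ≤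
        ENNReal.ofReal (2 ^ s) * ((ENNReal.ofReal lam)⁻¹ * μ (ball (ctr n) (rad n))) := by
      rintro ⟨n, hn⟩
      obtain ⟨hcE, hr0, hrδ⟩ := hpack n hn
      have hrlt : rad n < ρ := by linarith
      have hdens := hE _ hcE _ hr0 hrlt
      have h1 : (2 * rad n) ^ s = 2 ^ s * rad n ^ s :=
        Real.mul_rpow (by norm_num) hr0.le
      rw [h1, ENNReal.ofReal_mul h2s.le]
      gcongr
      rw [← ENNReal.div_eq_inv_mul,
        ENNReal.le_div_iff_mul_le (Or.inl hlam0) (Or.inl ENNReal.ofReal_ne_top), mul_comm,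
        ← ENNReal.ofReal_mul hlam.le]
      exact hdens
    calc (∑' n : p, ENNReal.ofReal ((2 * rad n) ^ s))
        ≤ ∑' n : p, ENNReal.ofReal (2 ^ s) * ((ENNReal.ofReal lam)⁻¹ * μ (ball (ctr n) (rad n))) :=
          ENNReal.tsum_le_tsum hterm
      _ = c * ∑' n : p, μ (ball (ctr n) (rad n)) := by
          rw [ENNReal.tsum_mul_left, ENNReal.tsum_mul_left, hc]; ring
      _ = c * μ (⋃ n ∈ p, ball (ctr n) (rad n)) := by
          congr 1
          exact (measure_biUnion p.to_countable hdisj' fun n _ => measurableSet_ball).symm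
      _ ≤ c * μ (cthickening δ E) := by
          gcongr
          refine iUnion₂_subset fun n hn => ?_
          obtain ⟨hcE, hr0, hrδ⟩ := hpack n hn
          exact ball_subset_closedBall.trans
            ((closedBall_subset_closedBall (by linarith)).trans
              (closedBall_subset_cthickening hcE δ))
  calc packingPre (· ^ s) E ≤ c * μ (cthickening δ E) := key
    _ ≤ c * (μ (closure E) + ε / c) := mul_le_mul_right hδth.le c
    _ = c * μ (closure E) + ε := by rw [mul_add, ENNReal.mul_div_cancel hc0 hctop]

lemma shells {K : Type*} [MetricSpace K] [MeasurableSpace K] [OpensMeasurableSpace K]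
    (μ : Measure K) [IsFiniteMeasure μ]
    (U A : Set K) (hU : IsOpen U) (hA : A ⊆ U) :
    ∃ W : ℕ → Set K, (A ⊆ ⋃ m, W m) ∧ (∀ m, W m ⊆ A) ∧
      ∑' m, μ (closure (W m)) ≤ μ U := by
  classical
  set g : K → ℝ≥0∞ := fun x => EMetric.infEdist x Uᶜ with hg
  have hgcont : Continuous g := EMetric.continuous_infEdist
  have hgmeas : Measurable g := hgcont.measurable
  have hT : Set.Countable {t : ℝ≥0∞ | 0 < μ {a | g a = t}} :=
    Measure.countable_meas_level_set_pos (μ := μ) hgmeas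
  have hchoice : ∀ m : ℕ, ∃ u : ℝ, u ∈ Ioo ((m + 2 : ℝ))⁻¹ ((m + 1 : ℝ))⁻¹ ∧
      μ {a | g a = ENNReal.ofReal u} = 0 := by
    intro m
    have hm2 : ((m + 2 : ℝ))⁻¹ < ((m + 1 : ℝ))⁻¹ :=
      inv_strictAnti₀ (by positivity) (by linarith)
    have hbad : Set.Countable {u : ℝ | u ∈ Ioo ((m + 2 : ℝ))⁻¹ ((m + 1 : ℝ))⁻¹ ∧
        0 < μ {a | g a = ENNReal.ofReal u}} := by
      have himg : {u : ℝ | u ∈ Ioo ((m + 2 : ℝ))⁻¹ ((m + 1 : ℝ))⁻¹ ∧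
          0 < μ {a | g a = ENNReal.ofReal u}} ⊆
          ENNReal.toReal '' {t : ℝ≥0∞ | 0 < μ {a | g a = t}} := by
        rintro v ⟨hv1, hv2⟩
        refine ⟨ENNReal.ofReal v, hv2, ?_⟩
        rw [ENNReal.toReal_ofReal]
        have : (0:ℝ) < (m + 2 : ℝ)⁻¹ := by positivity
        linarith [hv1.1]
      exact (hT.image _).mono himg
    obtain ⟨v, hv1, hv2⟩ := (hbad.dense_compl ℝ).exists_mem_open isOpen_Ioo
      (nonempty_Ioo.2 hm2)
    refine ⟨v, hv2, ?_⟩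
    by_contra hne
    exact hv1 ⟨hv2, pos_iff_ne_zero.2 hne⟩
  choose u hu hunull using hchoice
  set t : ℕ → ℝ≥0∞ := fun m => ENNReal.ofReal (u m) with ht
  have hupos : ∀ m, 0 < u m := fun m => lt_trans (by positivity) (hu m).1
  have htpos : ∀ m, 0 < t m := fun m => ENNReal.ofReal_pos.2 (hupos m)
  have htanti : StrictAnti t := by
    apply strictAnti_nat_of_succ_lt
    intro m
    apply (ENNReal.ofReal_lt_ofReal_iff_of_nonneg (hupos (m+1)).le).2
    have h1 := (hu (m+1)).2
    have h2 := (hu m).1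
    have e : ((m + 1 : ℕ) + 1 : ℝ) = (m : ℝ) + 2 := by push_cast; ring
    rw [e] at h1
    linarith
  -- interval families
  set I : ℕ → Set ℝ≥0∞ := fun m => Nat.rec (Ioi (t 0)) (fun m _ => Ioc (t (m+1)) (t m)) m with hI
  set Ic : ℕ → Set ℝ≥0∞ := fun m => Nat.rec (Ici (t 0)) (fun m _ => Icc (t (m+1)) (t m)) m with hIc
  set W : ℕ → Set K := fun m => A ∩ g ⁻¹' (I m) with hW
  have hWsub : ∀ m, W m ⊆ A := fun m => inter_subset_left
  have hgU : ∀ x ∈ U, 0 < g x := by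
    intro x hx
    apply Metric.infEDist_pos_iff_notMem_closure.2
    rw [hU.isClosed_compl.closure_eq]
    simpa using hx
  have hcover : A ⊆ ⋃ m, W m := by
    intro x hx
    have hgx : 0 < g x := hgU x (hA hx)
    have hex : ∃ m, t m < g x := by
      obtain ⟨k, hk⟩ := ENNReal.exists_inv_nat_lt hgx.ne'
      refine ⟨k, lt_of_le_of_lt ?_ hk⟩
      calc t k ≤ ENNReal.ofReal ((k + 1 : ℝ))⁻¹ := ENNReal.ofReal_le_ofReal (hu k).2.le
        _ ≤ (k : ℝ≥0∞)⁻¹ := by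
            rw [ENNReal.ofReal_inv_of_pos (by positivity)]
            apply ENNReal.inv_le_inv.2
            rw [show ((k:ℝ)+1) = ((k+1 : ℕ) : ℝ) by push_cast; ring, ENNReal.ofReal_natCast]
            exact_mod_cast Nat.le_succ k
    have hm0 : t (Nat.find hex) < g x := Nat.find_spec hex
    rcases Nat.eq_zero_or_pos (Nat.find hex) with h0 | hpos
    · refine mem_iUnion.2 ⟨0, hx, ?_⟩
      show g x ∈ Ioi (t 0)
      rw [h0] at hm0; exact hm0
    · obtain ⟨m, hm⟩ := Nat.exists_eq_succ_of_ne_zero hpos.ne'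
      refine mem_iUnion.2 ⟨m + 1, hx, ?_⟩
      rw [hm] at hm0
      have hnot : ¬ t m < g x := Nat.find_min hex (by omega)
      exact ⟨hm0, not_lt.1 hnot⟩
  refine ⟨W, hcover, hWsub, ?_⟩
  -- closure bound
  have hIcc : ∀ m, IsClosed (Ic m) := by
    intro m; cases m
    · exact isClosed_Ici
    · exact isClosed_Icc
  have hIsub : ∀ m, I m ⊆ Ic m := by
    intro m; cases m
    · exact Ioi_subset_Ici_self
    · exact Ioc_subset_Icc_self
  have hIcI : ∀ m, Ic m ⊆ I m ∪ {t m} := by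
    intro m; cases m with
    | zero =>
        intro y hy
        rcases eq_or_lt_of_le (show t 0 ≤ y from hy) with h | h
        · exact Or.inr (by simp [h.symm])
        · exact Or.inl h
    | succ m =>
        rintro y ⟨hy1, hy2⟩
        rcases eq_or_lt_of_le hy1 with h | h
        · exact Or.inr (by simp [h.symm])
        · exact Or.inl ⟨h, hy2⟩
  have hclos : ∀ m, μ (closure (W m)) ≤ μ (g ⁻¹' (I m)) := by
    intro m
    have h1 : closure (W m) ⊆ g ⁻¹' (Ic m) := by
      apply closure_minimal
      · exact (inter_subset_right).trans (preimage_mono (hIsub m))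
      · exact (hIcc m).preimage hgcont
    calc μ (closure (W m)) ≤ μ (g ⁻¹' (Ic m)) := measure_mono h1
      _ ≤ μ (g ⁻¹' (I m) ∪ {a | g a = t m}) := by
          apply measure_mono
          intro a ha
          rcases hIcI m ha with h | h
          · exact Or.inl h
          · exact Or.inr (by simpa using h)
      _ ≤ μ (g ⁻¹' (I m)) + μ {a | g a = t m} := measure_union_le _ _
      _ = μ (g ⁻¹' (I m)) := by rw [hunull m, add_zero]
  -- disjointness and sum
  have hIdisj : Pairwise (Function.onFun Disjoint fun m => g ⁻¹' (I m)) := by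
    have hIdisj' : Pairwise (Function.onFun Disjoint I) := by
      have key : ∀ i j : ℕ, i < j → Disjoint (I i) (I j) := by
        intro i j hij
        rw [Set.disjoint_left]
        intro y hyi hyj
        have hyj' : y ≤ t (j - 1) := by
          obtain ⟨j', rfl⟩ := Nat.exists_eq_succ_of_ne_zero (by omega : j ≠ 0)
          simpa using hyj.2
        have hyi' : t i < y := by
          cases i with
          | zero => exact hyi
          | succ i' => exact hyi.1
        have : t (j-1) ≤ t i := htanti.antitone (by omega)
        exact absurd ((hyi'.trans_le hyj').trans_le this) (lt_irrefl (t i))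
      intro i j hij
      rcases lt_or_gt_of_ne hij with h | h
      · exact key i j h
      · exact (key j i h).symm
    intro i j hij
    exact (hIdisj' hij).preimage g
  have hVmeas : ∀ m, MeasurableSet (g ⁻¹' (I m)) := by
    intro m
    apply hgmeas
    cases m
    · exact measurableSet_Ioi
    · exact measurableSet_Ioc
  calc ∑' m, μ (closure (W m)) ≤ ∑' m, μ (g ⁻¹' (I m)) := ENNReal.tsum_le_tsum hclos
    _ = μ (⋃ m, g ⁻¹' (I m)) := (measure_iUnion hIdisj hVmeas).symm
    _ ≤ μ U := by
        apply measure_mono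
        refine iUnion_subset fun m => ?_
        intro a ha
        by_contra haU
        have : g a = 0 := EMetric.infEdist_zero_of_mem (by simpa using haU)
        have hpos : 0 < g a := by
          cases m with
          | zero => exact lt_trans (htpos 0) ha
          | succ m' => exact lt_trans (htpos (m'+1)) ha.1
        rw [this] at hpos; exact lt_irrefl 0 hpos

lemma key_bound (n : ℕ)
    (μ : Measure (EuclideanSpace ℝ (Fin n))) [IsProbabilityMeasure μ]
    (F : Set (EuclideanSpace ℝ (Fin n)))
    (s : ℝ) (hs : 0 ≤ s) (L : ℝ) (hL : 0 < L)
    (h : ∀ x ∈ F,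
      ENNReal.ofReal L ≤
        Filter.liminf (fun r : ℝ => μ (Metric.closedBall x r) / ENNReal.ofReal (r ^ s))
          (nhdsWithin 0 (Set.Ioi 0)))
    (lam ε : ℝ) (hlam0 : 0 < lam) (hlamL : lam < L) (hε : 0 < ε) :
    packingMeasure (fun t => t ^ s) F ≤ ENNReal.ofReal (lam⁻¹ * 2 ^ s * (1 + 2 * ε)) := by
  classical
  set G : ℕ → Set (EuclideanSpace ℝ (Fin n)) := fun k =>
    {x : EuclideanSpace ℝ (Fin n) | ∀ r : ℝ, 0 < r → r < ((k:ℝ) + 1)⁻¹ → ENNReal.ofReal (lam * r ^ s) ≤ μ (ball x r)}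
    with hG
  have hGm : ∀ k, MeasurableSet (G k) := fun k =>
    G_measurable μ lam s _ hlam0.le hs
  set C : ℕ → Set (EuclideanSpace ℝ (Fin n)) := disjointed G with hC
  have hCm : ∀ k, MeasurableSet (C k) := MeasurableSet.disjointed hGm
  have hCdisj : Pairwise (Function.onFun Disjoint C) := disjoint_disjointed G
  have hCG : ∀ k, C k ⊆ G k := fun k => disjointed_le G k
  -- F is covered by the G k
  have hFG : F ⊆ ⋃ k, G k := by
    intro x hx
    have hlt : ENNReal.ofReal lam < ENNReal.ofReal L := by
      rw [ENNReal.ofReal_lt_ofReal_iff hL]; exact hlamL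
    have hev : ∀ᶠ r in 𝓝[>] (0:ℝ),
        ENNReal.ofReal lam < μ (closedBall x r) / ENNReal.ofReal (r ^ s) :=
      eventually_lt_of_lt_liminf (lt_of_lt_of_le hlt (h x hx))
    obtain ⟨η, hη, hsub⟩ := mem_nhdsGT_iff_exists_Ioo_subset.1 hev
    obtain ⟨k, hk⟩ := exists_nat_gt η⁻¹
    have hkη : ((k:ℝ) + 1)⁻¹ < η := by
      have hη0 : (0:ℝ) < η := hη
      rw [inv_lt_comm₀ (by positivity) hη0]
      exact hk.trans (by linarith)
    refine mem_iUnion.2 ⟨k, ?_⟩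
    intro r hr hrk
    refine aux_limit hr fun r' hr' hr'r => ?_
    have hr'η : r' ∈ Ioo (0:ℝ) η := ⟨hr', by linarith⟩
    have hP := hsub hr'η
    have hr's : (0:ℝ) < r' ^ s := Real.rpow_pos_of_pos hr' s
    have h1 : ENNReal.ofReal lam * ENNReal.ofReal (r' ^ s) ≤ μ (closedBall x r') := by
      refine (ENNReal.le_div_iff_mul_le (Or.inl ?_) (Or.inl ENNReal.ofReal_ne_top)).1 hP.le
      simp [ENNReal.ofReal_eq_zero, not_le, hr's]
    rw [← ENNReal.ofReal_mul hlam0.le] at h1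
    exact h1.trans (measure_mono (closedBall_subset_ball hr'r))
  have hFC : F ⊆ ⋃ k, C k := by rw [hC, iUnion_disjointed]; exact hFG
  -- choose open sets
  set εk : ℕ → ℝ≥0∞ := fun k => ENNReal.ofReal ε * 2⁻¹ ^ k with hεk
  have hεk0 : ∀ k, εk k ≠ 0 := by
    intro k
    apply mul_ne_zero
    · simp [ENNReal.ofReal_eq_zero, not_le, hε]
    · exact pow_ne_zero k (by simp)
  have hU : ∀ k, ∃ U : Set (EuclideanSpace ℝ (Fin n)), C k ⊆ U ∧ IsOpen U ∧ μ U < μ (C k) + εk k := by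
    intro k
    obtain ⟨U, h1, h2, h3⟩ := Set.exists_isOpen_lt_of_lt (C k) (μ (C k) + εk k)
      (ENNReal.lt_add_right (measure_ne_top μ _) (hεk0 k))
    exact ⟨U, h1, h2, h3⟩
  choose U hUsub hUopen hUlt using hU
  choose W hWcover hWsub hWsum using fun k => shells μ (U k) (C k) (hUopen k) (hUsub k)
  -- the countable cover
  set e : ℕ ≃ ℕ × ℕ := (Denumerable.eqv (ℕ × ℕ)).symm with he
  set E : ℕ → Set (EuclideanSpace ℝ (Fin n)) := fun i => W (e i).1 (e i).2 with hE
  have hcov : F ⊆ ⋃ i, E i := by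
    intro x hx
    obtain ⟨k, hk⟩ := mem_iUnion.1 (hFC hx)
    obtain ⟨m, hm⟩ := mem_iUnion.1 (hWcover k hk)
    refine mem_iUnion.2 ⟨e.symm (k, m), ?_⟩
    rw [hE]
    simp only [Equiv.apply_symm_apply]
    exact hm
  set c : ℝ≥0∞ := (ENNReal.ofReal lam)⁻¹ * ENNReal.ofReal (2 ^ s) with hc
  have hmain : packingMeasure (fun t => t ^ s) F ≤ c * (1 + ENNReal.ofReal ε * 2) := by
    calc packingMeasure (fun t => t ^ s) F ≤ ∑' i, packingPre (fun t => t ^ s) (E i) :=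
          iInf₂_le E hcov
      _ = ∑' p : ℕ × ℕ, packingPre (fun t => t ^ s) (W p.1 p.2) :=
          e.tsum_eq (fun p => packingPre (fun t => t ^ s) (W p.1 p.2))
      _ = ∑' k, ∑' m, packingPre (fun t => t ^ s) (W k m) :=
          ENNReal.tsum_prod (f := fun k m => packingPre (fun t => t ^ s) (W k m))
      _ ≤ ∑' k, ∑' m, c * μ (closure (W k m)) := by
          refine ENNReal.tsum_le_tsum fun k => ENNReal.tsum_le_tsum fun m => ?_
          have hdens : ∀ x ∈ W k m, ∀ r : ℝ, 0 < r → r < ((k:ℝ) + 1)⁻¹ →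
              ENNReal.ofReal (lam * r ^ s) ≤ μ (ball x r) := by
            intro x hx r h1 h2
            exact (hCG k (hWsub k m hx)) r h1 h2
          exact packingPre_le μ (W k m) s lam _ hs hlam0 (by positivity) hdens
      _ ≤ ∑' k, (c * (μ (C k) + εk k)) := by
          refine ENNReal.tsum_le_tsum fun k => ?_
          rw [ENNReal.tsum_mul_left]
          exact mul_le_mul_right ((hWsum k).trans (hUlt k).le) c
      _ = c * (∑' k, μ (C k) + ∑' k, εk k) := by
          rw [ENNReal.tsum_mul_left, ENNReal.tsum_add]
      _ ≤ c * (1 + ENNReal.ofReal ε * 2) := by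
          apply mul_le_mul_right
          apply add_le_add
          · rw [← measure_iUnion hCdisj hCm]
            exact prob_le_one
          · rw [hεk, ENNReal.tsum_mul_left, ENNReal.tsum_geometric]
            apply mul_le_mul_right
            rw [ENNReal.one_sub_inv_two, inv_inv]
  refine hmain.trans_eq ?_
  have hrhs : ENNReal.ofReal (lam⁻¹ * 2 ^ s * (1 + 2 * ε)) =
      ENNReal.ofReal lam⁻¹ * ENNReal.ofReal (2 ^ s) * (1 + ENNReal.ofReal ε * 2) := by
    rw [ENNReal.ofReal_mul (by positivity : (0:ℝ) ≤ lam⁻¹ * 2 ^ s),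
      ENNReal.ofReal_mul (by positivity : (0:ℝ) ≤ lam⁻¹),
      ENNReal.ofReal_add (by norm_num) (by positivity), ENNReal.ofReal_one,
      ENNReal.ofReal_mul (by norm_num : (0:ℝ) ≤ 2), ENNReal.ofReal_ofNat]
    ring
  rw [hrhs, hc, ENNReal.ofReal_inv_of_pos hlam0]

/-- Mass distribution principle for packing measure: if
`liminf_{r→0} μ(B(x,r)) r⁻ˢ ≥ λ` for all `x ∈ F`, then `𝒫^s(F) ≤ λ⁻¹ 2^s`. -/
theorem mass_distribution_principle_packing (n : ℕ)
    (μ : Measure (EuclideanSpace ℝ (Fin n))) [IsProbabilityMeasure μ]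
    (F : Set (EuclideanSpace ℝ (Fin n))) (hF : MeasurableSet F) (hsupp : μ Fᶜ = 0)
    (s : ℝ) (hs : 0 ≤ s) (L : ℝ) (hL : 0 < L)
    (h : ∀ x ∈ F,
      ENNReal.ofReal L ≤
        Filter.liminf (fun r : ℝ => μ (Metric.closedBall x r) / ENNReal.ofReal (r ^ s))
          (nhdsWithin 0 (Set.Ioi 0))) :
    packingMeasure (fun t => t ^ s) F ≤ ENNReal.ofReal (L⁻¹ * 2 ^ s) := by
  have key : ∀ lam ε : ℝ, 0 < lam → lam < L → 0 < ε →
      packingMeasure (fun t => t ^ s) F ≤ ENNReal.ofReal (lam⁻¹ * 2 ^ s * (1 + 2 * ε)) :=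
    fun lam ε h1 h2 h3 => key_bound n μ F s hs L hL h lam ε h1 h2 h3
  set X := packingMeasure (fun t => t ^ s) F with hX
  set a : ℕ → ℝ := fun j => L * (1 - ((j:ℝ) + 2)⁻¹) with ha
  set εs : ℕ → ℝ := fun j => ((j:ℝ) + 1)⁻¹ with hεs
  have hbound : ∀ j, X ≤ ENNReal.ofReal ((a j)⁻¹ * 2 ^ s * (1 + 2 * εs j)) := by
    intro j
    have h1 : ((j:ℝ) + 2)⁻¹ ≤ 2⁻¹ := by
      apply inv_anti₀ (by norm_num)
      have : (0:ℝ) ≤ (j:ℝ) := Nat.cast_nonneg j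
      linarith
    have h2 : (0:ℝ) < ((j:ℝ) + 2)⁻¹ := by positivity
    refine key (a j) (εs j) ?_ ?_ (by positivity)
    · apply mul_pos hL; linarith
    · rw [ha]
      have : 1 - ((j:ℝ) + 2)⁻¹ < 1 := by linarith
      calc L * (1 - ((j:ℝ) + 2)⁻¹) < L * 1 := mul_lt_mul_of_pos_left this hL
        _ = L := mul_one L
  have ht1 : Tendsto (fun j : ℕ => ((j:ℝ) + 2)⁻¹) atTop (𝓝 0) :=
    tendsto_inv_atTop_zero.comp
      (tendsto_atTop_add_const_right atTop 2 tendsto_natCast_atTop_atTop)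
  have ht2 : Tendsto εs atTop (𝓝 0) :=
    tendsto_inv_atTop_zero.comp
      (tendsto_atTop_add_const_right atTop 1 tendsto_natCast_atTop_atTop)
  have hta : Tendsto a atTop (𝓝 L) := by
    have hh := ((tendsto_const_nhds (x := (1:ℝ))).sub ht1).const_mul L
    simpa using hh
  have htall : Tendsto (fun j => ENNReal.ofReal ((a j)⁻¹ * 2 ^ s * (1 + 2 * εs j))) atTop
      (𝓝 (ENNReal.ofReal (L⁻¹ * 2 ^ s))) := by
    apply ENNReal.tendsto_ofReal
    have hh : Tendsto (fun j => (a j)⁻¹ * 2 ^ s * (1 + 2 * εs j)) atTop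
        (𝓝 (L⁻¹ * 2 ^ s * (1 + 2 * 0))) :=
      ((hta.inv₀ hL.ne').mul_const _).mul (tendsto_const_nhds.add (ht2.const_mul 2))
    simpa using hh
  exact ge_of_tendsto' htall hbound
end

section
/- Let $\mathbb{I} = \{\mathbb{I}_1, \dots, \mathbb{I}_N\}$ be a RIFS of bi-Lipschitz contractions on a compact metric space $K$, with random attractors $F_\omega$ for $\omega \in \Omega = \{1,\dots,N\}^{\mathbb{N}}$. Let $G$ be a gauge function. If $\inf_{u \in \Omega} \mathcal{H}^G(F_u) = 0$, then the set $\{\omega \in \Omega : \mathcal{H}^G(F_\omega) = 0\}$ is residual in $(\Omega, d_\Omega)$; i.e., for a typical $\omega$, $\mathcal{H}^G(F_\omega) = 0$. -/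
open Metric MeasureTheory Filter Set
open scoped ENNReal NNReal

/-- A gauge function: continuous, monotone increasing and positive on `(0,∞)`,
with `G(t) → 0` as `t → 0⁺`. -/
def IsGauge (G : ℝ → ℝ) : Prop :=
  ContinuousOn G (Set.Ioi 0) ∧ MonotoneOn G (Set.Ioi 0) ∧ (∀ t, 0 < t → 0 < G t) ∧
    Filter.Tendsto G (nhdsWithin 0 (Set.Ioi 0)) (nhds 0)

/-- Hausdorff measure with respect to the gauge `G`. -/
noncomputable def hausdorffG {K : Type*} [MetricSpace K] [MeasurableSpace K] [BorelSpace K]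
    (G : ℝ → ℝ) : MeasureTheory.Measure K :=
  MeasureTheory.Measure.mkMetric (fun d => ENNReal.ofReal (G d.toReal))

/-- The level-`k` approximation of the random attractor: the union over all length-`k`
words `(i₁,…,i_k)` with `i_l ∈ 𝓘_{ω_l}` of `S_{ω₁,i₁} ∘ ⋯ ∘ S_{ω_k,i_k}(K₀)`. -/
def levelSets {X : Type*} {N : ℕ} (m : Fin N → ℕ) (S : ∀ i, Fin (m i) → X → X) (K₀ : Set X) :
    (ℕ → Fin N) → ℕ → Set X
  | _, 0 => K₀
  | ω, k+1 => ⋃ j : Fin (m (ω 0)), S (ω 0) j '' levelSets m S K₀ (fun n => ω (n+1)) k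

/-- The random attractor `F_ω = ⋂_k ⋃_{i₁,…,i_k} S_{ω₁,i₁} ∘ ⋯ ∘ S_{ω_k,i_k}(K₀)`. -/
def attractorOf {X : Type*} {N : ℕ} (m : Fin N → ℕ) (S : ∀ i, Fin (m i) → X → X)
    (K₀ : Set X) (ω : ℕ → Fin N) : Set X :=
  ⋂ k, levelSets m S K₀ ω k

/-- `φ` is a bi-Lipschitz contraction. -/
def IsBiLipContraction {K : Type*} [MetricSpace K] (φ : K → K) : Prop :=
  ∃ c C : ℝ, 0 < c ∧ C < 1 ∧
    ∀ x y, c * dist x y ≤ dist (φ x) (φ y) ∧ dist (φ x) (φ y) ≤ C * dist x y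


section Aux

variable {K : Type*} [MetricSpace K]

lemma biLip_lipschitzWith {φ : K → K} (hφ : IsBiLipContraction φ) : LipschitzWith 1 φ := by
  obtain ⟨c, C, hc, hC, h⟩ := hφ
  refine LipschitzWith.of_dist_le_mul fun x y => ?_
  have h2 := (h x y).2
  have h3 := dist_nonneg (x := x) (y := y)
  push_cast
  nlinarith

lemma biLip_diam_ne_zero {φ : K → K} (hφ : IsBiLipContraction φ) {t : Set K}
    (ht : Metric.ediam t ≠ 0) : Metric.ediam (φ '' t) ≠ 0 := by
  obtain ⟨c, C, hc, hC, h⟩ := hφ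
  rw [← pos_iff_ne_zero, Metric.ediam_pos_iff'] at ht ⊢
  obtain ⟨x, hx, y, hy, hxy⟩ := ht
  refine ⟨φ x, ⟨x, hx, rfl⟩, φ y, ⟨y, hy, rfl⟩, fun hxy' => hxy ?_⟩
  have h1 := (h x y).1
  have h4 : dist (φ x) (φ y) = 0 := by rw [hxy', dist_self]
  have h5 : dist x y ≤ 0 := by nlinarith
  have := dist_nonneg (x := x) (y := y)
  exact dist_le_zero.mp h5

lemma levelSets_congr {X : Type*} {N : ℕ} (m : Fin N → ℕ) (S : ∀ i, Fin (m i) → X → X)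
    (K₀ : Set X) : ∀ (k : ℕ) (ω ω' : ℕ → Fin N), (∀ i, i < k → ω i = ω' i) →
    levelSets m S K₀ ω k = levelSets m S K₀ ω' k := by
  intro k
  induction k with
  | zero => intro ω ω' _; rfl
  | succ k ih =>
    intro ω ω' h
    have h0 : ω 0 = ω' 0 := h 0 k.succ_pos
    have ht : levelSets m S K₀ (fun n => ω (n+1)) k = levelSets m S K₀ (fun n => ω' (n+1)) k :=
      ih _ _ fun i hi => h (i+1) (Nat.succ_lt_succ hi)
    simp only [levelSets, ht]
    rw [h0]

lemma levelSets_antitone {X : Type*} {N : ℕ} (m : Fin N → ℕ) (S : ∀ i, Fin (m i) → X → X) :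
    ∀ (k : ℕ) (ω : ℕ → Fin N),
      levelSets m S (Set.univ : Set X) ω (k+1) ⊆ levelSets m S Set.univ ω k := by
  intro k
  induction k with
  | zero => intro ω; simp [levelSets]
  | succ k ih =>
    intro ω
    show (⋃ j : Fin (m (ω 0)), S (ω 0) j '' levelSets m S Set.univ (fun n => ω (n+1)) (k+1)) ⊆
      ⋃ j : Fin (m (ω 0)), S (ω 0) j '' levelSets m S Set.univ (fun n => ω (n+1)) k
    exact Set.iUnion_mono fun j => Set.image_mono (ih _)

lemma isCompact_levelSets [CompactSpace K] {N : ℕ} (m : Fin N → ℕ)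
    (S : ∀ i, Fin (m i) → K → K) (hS : ∀ i j, IsBiLipContraction (S i j)) :
    ∀ (k : ℕ) (ω : ℕ → Fin N), IsCompact (levelSets m S Set.univ ω k) := by
  intro k
  induction k with
  | zero => intro ω; exact isCompact_univ
  | succ k ih =>
    intro ω
    simp only [levelSets]
    exact isCompact_iUnion fun j => ((ih _).image (biLip_lipschitzWith (hS _ _)).continuous)

end Aux

noncomputable def gaugeTerm {K : Type*} [MetricSpace K] (G : ℝ → ℝ) (t : Set K) : ℝ≥0∞ :=
  ⨆ _ : t.Nonempty, ENNReal.ofReal (G (Metric.ediam t).toReal)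

section Aux2

variable {K : Type*} [MetricSpace K] {G : ℝ → ℝ}

lemma gaugeTerm_empty (G : ℝ → ℝ) : gaugeTerm G (∅ : Set K) = 0 := by
  simp [gaugeTerm]

lemma gaugeTerm_of_nonempty {t : Set K} (ht : t.Nonempty) :
    gaugeTerm G t = ENNReal.ofReal (G (Metric.ediam t).toReal) := by
  simp [gaugeTerm, ht]

lemma gauge_control (hG : IsGauge G) {d ρ : ℝ≥0∞} (hd : d ≠ ∞) (hρ : 0 < ρ)
    {δ : ℝ≥0} (hδ : 0 < δ) :
    ∃ η : ℝ≥0, 0 < η ∧ 2 * (η : ℝ≥0∞) ≤ ρ ∧ ∀ d' : ℝ≥0∞, d ≤ d' → d' ≤ d + 2 * η →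
      ENNReal.ofReal (G d'.toReal) ≤ ENNReal.ofReal (G d.toReal) + δ := by
  obtain ⟨Gcont, Gmono, Gpos, Gtend⟩ := hG
  obtain ⟨r0, hr0pos, hr0⟩ : ∃ r0 : ℝ≥0, 0 < r0 ∧ 2 * (r0 : ℝ≥0∞) ≤ ρ := by
    rcases eq_or_ne ρ ∞ with h | h
    · exact ⟨1, one_pos, by simp [h]⟩
    · refine ⟨ρ.toNNReal / 4, div_pos (ENNReal.toNNReal_pos hρ.ne' h) (by norm_num), ?_⟩
      have h1 : (2 * (ρ.toNNReal / 4) : ℝ≥0) ≤ ρ.toNNReal := by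
        rw [← NNReal.coe_le_coe]
        push_cast
        linarith [ENNReal.toReal_nonneg (a := ρ)]
      calc 2 * ((ρ.toNNReal / 4 : ℝ≥0) : ℝ≥0∞) = ((2 * (ρ.toNNReal / 4) : ℝ≥0) : ℝ≥0∞) := by
            push_cast; ring
        _ ≤ (ρ.toNNReal : ℝ≥0∞) := by exact_mod_cast h1
        _ = ρ := ENNReal.coe_toNNReal h
  have hδR : (0:ℝ) < δ := hδ
  have hcoe2 : ∀ η : ℝ≥0, (2 * (η : ℝ≥0∞)).toReal = 2 * (η : ℝ) := by
    intro η; simp [ENNReal.toReal_mul]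
  rcases eq_or_ne d 0 with hd0 | hd0
  · -- d = 0 : use the limit of G at 0
    have hev : {s : ℝ | G s < δ} ∈ nhdsWithin 0 (Set.Ioi 0) :=
      Gtend.eventually (Filter.Tendsto.eventually_lt_const hδR tendsto_id)
    rw [mem_nhdsGT_iff_exists_Ioo_subset] at hev
    obtain ⟨u, hu, huG⟩ := hev
    have hu0 : (0:ℝ) < u := hu
    set η : ℝ≥0 := min (u.toNNReal / 4) r0 with hη
    have hηpos : 0 < η := lt_min (div_pos (Real.toNNReal_pos.mpr hu0) (by norm_num)) hr0pos
    have hη2 : 2 * (η : ℝ) < u := by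
      have h4 : ((u.toNNReal : ℝ)) = u := Real.coe_toNNReal _ hu0.le
      have h5 : (η : ℝ) ≤ (u.toNNReal / 4 : ℝ≥0) := by exact_mod_cast min_le_left _ _
      have h6 : ((u.toNNReal / 4 : ℝ≥0) : ℝ) = u / 4 := by push_cast; rw [h4]
      nlinarith
    refine ⟨η, hηpos, ?_, ?_⟩
    · calc 2 * (η : ℝ≥0∞) ≤ 2 * (r0 : ℝ≥0∞) := by
            gcongr; exact_mod_cast min_le_right _ _
        _ ≤ ρ := hr0
    · intro d' hdd' hd'le
      rcases eq_or_ne d' 0 with h0 | h0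
      · rw [h0, hd0]; exact le_self_add
      · rw [hd0, zero_add] at hd'le
        have h2top : (2 * (η : ℝ≥0∞)) ≠ ∞ := ENNReal.mul_ne_top (by norm_num) ENNReal.coe_ne_top
        have hfin : d' ≠ ∞ := ne_top_of_le_ne_top h2top hd'le
        have h1 : 0 < d'.toReal := ENNReal.toReal_pos h0 hfin
        have h2 : d'.toReal ≤ 2 * (η : ℝ) := by
          have := ENNReal.toReal_mono h2top hd'le
          rwa [hcoe2] at this
        have := huG ⟨h1, lt_of_le_of_lt h2 hη2⟩
        calc ENNReal.ofReal (G d'.toReal) ≤ ENNReal.ofReal δ := ENNReal.ofReal_le_ofReal this.le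
          _ = (δ : ℝ≥0∞) := ENNReal.ofReal_coe_nnreal
          _ ≤ _ := le_add_self
  · -- d ≠ 0 : use continuity of G at d.toReal
    have hdr : 0 < d.toReal := ENNReal.toReal_pos hd0 hd
    have hcont : ContinuousWithinAt G (Set.Ioi 0) d.toReal := Gcont _ hdr
    have hev : ∀ᶠ s in nhdsWithin d.toReal (Set.Ioi 0), G s < G d.toReal + δ :=
      hcont.eventually (Filter.Tendsto.eventually_lt_const (by linarith) tendsto_id)
    rw [eventually_nhdsWithin_iff, Metric.eventually_nhds_iff] at hev
    obtain ⟨ε₀, hε₀, hball⟩ := hev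
    set η : ℝ≥0 := min (ε₀.toNNReal / 4) r0 with hη
    have hηpos : 0 < η := lt_min (div_pos (Real.toNNReal_pos.mpr hε₀) (by norm_num)) hr0pos
    have hη2 : 2 * (η : ℝ) < ε₀ := by
      have h4 : ((ε₀.toNNReal : ℝ)) = ε₀ := Real.coe_toNNReal _ hε₀.le
      have h5 : (η : ℝ) ≤ (ε₀.toNNReal / 4 : ℝ≥0) := by exact_mod_cast min_le_left _ _
      have h6 : ((ε₀.toNNReal / 4 : ℝ≥0) : ℝ) = ε₀ / 4 := by push_cast; rw [h4]
      nlinarith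
    refine ⟨η, hηpos, ?_, ?_⟩
    · calc 2 * (η : ℝ≥0∞) ≤ 2 * (r0 : ℝ≥0∞) := by
            gcongr; exact_mod_cast min_le_right _ _
        _ ≤ ρ := hr0
    · intro d' hdd' hd'le
      have h2top : (2 * (η : ℝ≥0∞)) ≠ ∞ := ENNReal.mul_ne_top (by norm_num) ENNReal.coe_ne_top
      have hsumtop : d + 2 * (η : ℝ≥0∞) ≠ ∞ := ENNReal.add_ne_top.2 ⟨hd, h2top⟩
      have hfin : d' ≠ ∞ := ne_top_of_le_ne_top hsumtop hd'le
      have h1 : d.toReal ≤ d'.toReal := ENNReal.toReal_mono hfin hdd'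
      have h2 : d'.toReal ≤ d.toReal + 2 * (η : ℝ) := by
        have := ENNReal.toReal_mono hsumtop hd'le
        rwa [ENNReal.toReal_add hd h2top, hcoe2] at this
      have h3 : dist d'.toReal d.toReal < ε₀ := by
        rw [Real.dist_eq, abs_lt]
        constructor <;> nlinarith
      have := hball h3 (lt_of_lt_of_le hdr h1)
      calc ENNReal.ofReal (G d'.toReal) ≤ ENNReal.ofReal (G d.toReal + δ) :=
            ENNReal.ofReal_le_ofReal this.le
        _ ≤ ENNReal.ofReal (G d.toReal) + ENNReal.ofReal δ := ENNReal.ofReal_add_le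
        _ = _ := by rw [ENNReal.ofReal_coe_nnreal]

end Aux2

section Aux3

variable {K : Type*} [MetricSpace K] {G : ℝ → ℝ}

lemma gaugeTerm_image_le (hG : IsGauge G) {φ : K → K} (hφ : IsBiLipContraction φ)
    {t : Set K} (ht : Metric.ediam t ≠ ∞) :
    gaugeTerm G (φ '' t) ≤ gaugeTerm G t := by
  rcases t.eq_empty_or_nonempty with rfl | hne
  · simp [gaugeTerm]
  · rw [gaugeTerm_of_nonempty (hne.image φ), gaugeTerm_of_nonempty hne]
    have hle : Metric.ediam (φ '' t) ≤ Metric.ediam t := by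
      have := (biLip_lipschitzWith hφ).ediam_image_le t
      simpa using this
    rcases eq_or_ne (Metric.ediam (φ '' t)) 0 with h0 | h0
    · have ht0 : Metric.ediam t = 0 := by
        by_contra h
        exact biLip_diam_ne_zero hφ h h0
      rw [h0, ht0]
    · obtain ⟨Gcont, Gmono, Gpos, Gtend⟩ := hG
      have hfin : Metric.ediam (φ '' t) ≠ ∞ := ne_top_of_le_ne_top ht hle
      have h1 : 0 < (Metric.ediam (φ '' t)).toReal := ENNReal.toReal_pos h0 hfin
      have h2 : (Metric.ediam (φ '' t)).toReal ≤ (Metric.ediam t).toReal :=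
        ENNReal.toReal_mono ht hle
      exact ENNReal.ofReal_le_ofReal (Gmono h1 (lt_of_lt_of_le h1 h2) h2)

end Aux3

lemma density_core {K : Type*} [MetricSpace K] [CompactSpace K]
    [MeasurableSpace K] [BorelSpace K]
    {N : ℕ} (m : Fin N → ℕ) (hm : ∀ i, 0 < m i)
    (S : ∀ i, Fin (m i) → K → K) (hS : ∀ i j, IsBiLipContraction (S i j))
    (G : ℝ → ℝ) (hG : IsGauge G)
    (h0 : (⨅ u : ℕ → Fin N, hausdorffG G (attractorOf m S Set.univ u)) = 0) :
    ∀ (k : ℕ) (w : ℕ → Fin N) (ε r : ℝ≥0∞), 0 < ε → 0 < r → r ≠ ∞ →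
    ∃ (ω : ℕ → Fin N) (k' : ℕ) (t : ℕ → Set K),
      (∀ i, i < k → ω i = w i) ∧ levelSets m S Set.univ ω k' ⊆ ⋃ i, t i ∧
      (∀ i, Metric.ediam (t i) ≤ r) ∧ (∑' i, gaugeTerm G (t i)) ≤ ε := by
  intro k
  induction k with
  | zero =>
    intro w ε r hε hr hrtop
    have hε2 : (0 : ℝ≥0∞) < ε / 2 := ENNReal.half_pos hε.ne'
    have hr2 : (0 : ℝ≥0∞) < r / 2 := ENNReal.half_pos hr.ne'
    have hr2top : r / 2 ≠ ∞ := (ENNReal.div_lt_top hrtop (by norm_num)).ne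
    have hlt : (⨅ u : ℕ → Fin N, hausdorffG G (attractorOf m S Set.univ u)) < ε / 2 := by
      rw [h0]; exact hε2
    rw [iInf_lt_iff] at hlt
    obtain ⟨u, hu⟩ := hlt
    have hu' : Measure.mkMetric (fun d => ENNReal.ofReal (G d.toReal))
        (attractorOf m S Set.univ u) < ε / 2 := hu
    rw [Measure.mkMetric_apply] at hu'
    have hinf := lt_of_le_of_lt
      (le_iSup₂ (f := fun r' (_ : (0:ℝ≥0∞) < r') =>
        ⨅ (t : ℕ → Set K) (_ : attractorOf m S Set.univ u ⊆ Set.iUnion t)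
          (_ : ∀ n, Metric.ediam (t n) ≤ r'),
          ∑' n, ⨆ _ : (t n).Nonempty, ENNReal.ofReal (G (Metric.ediam (t n)).toReal))
        (r/2) hr2) hu'
    simp only [iInf_lt_iff] at hinf
    obtain ⟨t, hsub, hdiam, hsum⟩ := hinf
    have hsum' : ∑' n, gaugeTerm G (t n) ≤ ε / 2 := hsum.le
    obtain ⟨δ, hδpos, hδsum⟩ := ENNReal.exists_pos_sum_of_countable hε2.ne' ℕ
    have hch : ∀ n : ℕ, ∃ η : ℝ≥0, 0 < η ∧ 2 * (η : ℝ≥0∞) ≤ r / 2 ∧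
        ∀ d' : ℝ≥0∞, Metric.ediam (t n) ≤ d' → d' ≤ Metric.ediam (t n) + 2 * η →
        ENNReal.ofReal (G d'.toReal) ≤ ENNReal.ofReal (G (Metric.ediam (t n)).toReal) + δ n :=
      fun n => gauge_control hG (ne_top_of_le_ne_top hr2top (hdiam n)) hr2 (hδpos n)
    choose η hη1 hη2 hη3 using hch
    set o : ℕ → Set K := fun n => Metric.thickening (η n) (t n) with ho
    have hto : ∀ n, t n ⊆ o n := fun n =>
      Metric.self_subset_thickening (by exact_mod_cast hη1 n) _
    have hocov : attractorOf m S Set.univ u ⊆ ⋃ n, o n :=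
      hsub.trans (Set.iUnion_mono fun n => hto n)
    -- compactness: some level set is inside the open cover
    have hcl : ∀ k' : ℕ, IsClosed (levelSets m S Set.univ u k' ∩ (⋃ n, o n)ᶜ) := fun k' =>
      ((isCompact_levelSets m S hS k' u).isClosed).inter
        (isOpen_iUnion fun n => Metric.isOpen_thickening).isClosed_compl
    have hanti : Antitone (fun k' => levelSets m S Set.univ u k' ∩ (⋃ n, o n)ᶜ) := by
      refine antitone_nat_of_succ_le fun k' => ?_
      exact Set.inter_subset_inter_left _ (levelSets_antitone m S k' u)
    have hint : (Set.univ ∩ ⋂ k', (levelSets m S Set.univ u k' ∩ (⋃ n, o n)ᶜ)) = ∅ := by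
      rw [Set.univ_inter, ← Set.iInter_inter, Set.eq_empty_iff_forall_notMem]
      rintro x ⟨hx1, hx2⟩
      exact hx2 (hocov hx1)
    obtain ⟨k', hk'⟩ := isCompact_univ.elim_directed_family_closed _ hcl hint hanti.directed_ge
    have hcov : levelSets m S Set.univ u k' ⊆ ⋃ n, o n := by
      intro x hx
      by_contra hxo
      have hmem : x ∈ (Set.univ : Set K) ∩
          (levelSets m S Set.univ u k' ∩ (⋃ n, o n)ᶜ) := ⟨trivial, hx, hxo⟩
      rw [hk'] at hmem
      exact hmem
    refine ⟨u, k', o, fun i hi => absurd hi (Nat.not_lt_zero i), hcov, ?_, ?_⟩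
    · intro n
      calc Metric.ediam (o n) ≤ Metric.ediam (t n) + 2 * η n := Metric.ediam_thickening_le (η n)
        _ ≤ r / 2 + r / 2 := add_le_add (hdiam n) (hη2 n)
        _ = r := ENNReal.add_halves r
    · have hterm : ∀ n, gaugeTerm G (o n) ≤ gaugeTerm G (t n) + δ n := by
        intro n
        rcases (t n).eq_empty_or_nonempty with h | hne
        · simp [ho, h, Metric.thickening_empty, gaugeTerm]
        · rw [gaugeTerm_of_nonempty (hne.mono (hto n)), gaugeTerm_of_nonempty hne]
          exact hη3 n _ (Metric.ediam_mono (hto n)) (Metric.ediam_thickening_le (η n))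
      calc ∑' n, gaugeTerm G (o n) ≤ ∑' n, (gaugeTerm G (t n) + (δ n : ℝ≥0∞)) :=
            ENNReal.tsum_le_tsum hterm
        _ = (∑' n, gaugeTerm G (t n)) + ∑' n, (δ n : ℝ≥0∞) := ENNReal.tsum_add
        _ ≤ ε / 2 + ε / 2 := add_le_add hsum' hδsum.le
        _ = ε := ENNReal.add_halves ε
  | succ k ih =>
    intro w ε r hε hr hrtop
    have hM : 0 < m (w 0) := hm _
    haveI : NeZero (m (w 0)) := ⟨hM.ne'⟩
    have hε' : (0 : ℝ≥0∞) < ε / (m (w 0)) :=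
      ENNReal.div_pos hε.ne' (ENNReal.natCast_ne_top _)
    obtain ⟨ω', k', t, hw', hcov', hdiam', hsum'⟩ :=
      ih (fun n => w (n+1)) (ε / (m (w 0))) r hε' hr hrtop
    set ω : ℕ → Fin N := fun n => Nat.casesOn n (w 0) ω' with hω
    let e : ℕ ≃ ℕ × Fin (m (w 0)) := Nat.divModEquiv (m (w 0))
    set t' : ℕ → Set K := fun n => S (w 0) (e n).2 '' t (e n).1 with ht'
    refine ⟨ω, k'+1, t', ?_, ?_, ?_, ?_⟩
    · intro i hi
      cases i with
      | zero => rfl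
      | succ i => exact hw' i (Nat.lt_of_succ_lt_succ hi)
    · have hlev : levelSets m S Set.univ ω (k'+1) =
          ⋃ j : Fin (m (w 0)), S (w 0) j '' levelSets m S Set.univ ω' k' := rfl
      rw [hlev]
      intro x hx
      rw [Set.mem_iUnion] at hx
      obtain ⟨j, y, hy, rfl⟩ := hx
      obtain ⟨i, hyi⟩ := Set.mem_iUnion.mp (hcov' hy)
      refine Set.mem_iUnion.mpr ⟨e.symm (i, j), ?_⟩
      rw [ht']
      simp only [Equiv.apply_symm_apply]
      exact ⟨y, hyi, rfl⟩
    · intro n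
      have := (biLip_lipschitzWith (hS (w 0) (e n).2)).ediam_image_le (t (e n).1)
      simp only [ENNReal.coe_one, one_mul] at this
      exact this.trans (hdiam' _)
    · calc ∑' n, gaugeTerm G (t' n)
          = ∑' p : ℕ × Fin (m (w 0)), gaugeTerm G (S (w 0) p.2 '' t p.1) :=
            e.tsum_eq (fun p => gaugeTerm G (S (w 0) p.2 '' t p.1))
        _ = ∑' (i : ℕ), ∑' (j : Fin (m (w 0))), gaugeTerm G (S (w 0) j '' t i) :=
            ENNReal.tsum_prod (f := fun i j => gaugeTerm G (S (w 0) j '' t i))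
        _ ≤ ∑' (i : ℕ), ∑' (_ : Fin (m (w 0))), gaugeTerm G (t i) :=
            ENNReal.tsum_le_tsum fun i => ENNReal.tsum_le_tsum fun j =>
              gaugeTerm_image_le hG (hS _ _) (ne_top_of_le_ne_top hrtop (hdiam' i))
        _ = ∑' (i : ℕ), (m (w 0) : ℝ≥0∞) * gaugeTerm G (t i) := by
            simp [tsum_fintype, Finset.sum_const, Finset.card_univ, nsmul_eq_mul]
        _ = (m (w 0) : ℝ≥0∞) * ∑' i, gaugeTerm G (t i) := ENNReal.tsum_mul_left
        _ ≤ (m (w 0) : ℝ≥0∞) * (ε / (m (w 0))) := mul_le_mul_right hsum' _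
        _ ≤ ε := ENNReal.mul_div_le


/-- If the infimal `𝓗^G`-measure of the random attractors is `0`, then the set of `ω`
with `𝓗^G(F_ω) = 0` is residual. -/
theorem typical_hausdorffG_eq_zero {K : Type*} [MetricSpace K] [CompactSpace K] [Nonempty K]
    [MeasurableSpace K] [BorelSpace K]
    {N : ℕ} (hN : 0 < N) (m : Fin N → ℕ) (hm : ∀ i, 0 < m i)
    (S : ∀ i, Fin (m i) → K → K) (hS : ∀ i j, IsBiLipContraction (S i j))
    (G : ℝ → ℝ) (hG : IsGauge G)
    (h0 : (⨅ u : ℕ → Fin N, hausdorffG G (attractorOf m S Set.univ u)) = 0) :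
    {ω : ℕ → Fin N | hausdorffG G (attractorOf m S Set.univ ω) = 0} ∈
      residual (ℕ → Fin N) := by
  classical
  set U : ℕ → Set (ℕ → Fin N) := fun n => {ω | ∃ k, ∃ t : ℕ → Set K,
    levelSets m S Set.univ ω k ⊆ ⋃ i, t i ∧
    (∀ i, Metric.ediam (t i) ≤ ((n : ℝ≥0∞) + 1)⁻¹) ∧
    (∑' i, gaugeTerm G (t i)) ≤ ((n : ℝ≥0∞) + 1)⁻¹} with hU
  have hinvpos : ∀ n : ℕ, (0 : ℝ≥0∞) < ((n : ℝ≥0∞) + 1)⁻¹ := fun n =>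
    ENNReal.inv_pos.mpr (by simp)
  have hinvtop : ∀ n : ℕ, ((n : ℝ≥0∞) + 1)⁻¹ ≠ ∞ := fun n =>
    ENNReal.inv_ne_top.mpr (lt_of_lt_of_le one_pos le_add_self).ne'
  have hopen : ∀ n, IsOpen (U n) := by
    intro n
    rw [isOpen_iff_forall_mem_open]
    intro ω hω
    obtain ⟨k, t, hcov, hd, hs⟩ := hω
    refine ⟨{ω' | ∀ i ∈ Finset.range k, ω' i = ω i}, ?_, ?_, ?_⟩
    · intro ω' hω'
      exact ⟨k, t, by
        rwa [levelSets_congr m S Set.univ k ω' ω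
          (fun i hi => hω' i (Finset.mem_range.mpr hi))], hd, hs⟩
    · have heq : {ω' : ℕ → Fin N | ∀ i ∈ Finset.range k, ω' i = ω i} =
          ⋂ i ∈ Finset.range k, (fun ω' : ℕ → Fin N => ω' i) ⁻¹' {ω i} := by
        ext ω'; simp [Set.mem_iInter]
      rw [heq]
      exact isOpen_biInter_finset fun i _ =>
        (continuous_apply i).isOpen_preimage _ (isOpen_discrete _)
    · intro i _; rfl
  have hdense : ∀ n, Dense (U n) := by
    intro n
    rw [dense_iff_inter_open]
    rintro V hV ⟨ω₀, hω₀⟩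
    obtain ⟨I, v, hIv, hsub⟩ := isOpen_pi_iff.mp hV ω₀ hω₀
    set k := I.sup id + 1 with hk
    obtain ⟨ω, k', t, hw, hcov, hd, hs⟩ := density_core m hm S hS G hG h0 k ω₀
      ((n : ℝ≥0∞) + 1)⁻¹ ((n : ℝ≥0∞) + 1)⁻¹ (hinvpos n) (hinvpos n) (hinvtop n)
    refine ⟨ω, ?_, k', t, hcov, hd, hs⟩
    apply hsub
    intro i hi
    have hik : i < k := Nat.lt_succ_of_le (Finset.le_sup (f := id) hi)
    rw [hw i hik]
    exact (hIv i hi).2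
  have hsubset : (⋂ n, U n) ⊆
      {ω : ℕ → Fin N | hausdorffG G (attractorOf m S Set.univ ω) = 0} := by
    intro ω hω
    simp only [Set.mem_setOf_eq]
    have hmk : Measure.mkMetric (fun d => ENNReal.ofReal (G d.toReal))
        (attractorOf m S Set.univ ω) = 0 := by
      rw [Measure.mkMetric_apply]
      refine le_antisymm ?_ zero_le
      refine iSup₂_le fun r hr => ?_
      refine ENNReal.le_of_forall_pos_le_add fun c hc _ => ?_
      rw [zero_add]
      obtain ⟨n₀, hn₀⟩ := ENNReal.exists_inv_nat_lt
        (a := min r (c : ℝ≥0∞)) (lt_min hr (ENNReal.coe_pos.mpr hc)).ne'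
      have hmono : ((n₀ : ℝ≥0∞) + 1)⁻¹ ≤ ((n₀ : ℝ≥0∞))⁻¹ :=
        ENNReal.inv_le_inv' le_self_add
      have hle : ((n₀ : ℝ≥0∞) + 1)⁻¹ ≤ min r (c : ℝ≥0∞) := hmono.trans hn₀.le
      obtain ⟨k, t, hcov, hd, hs⟩ := Set.mem_iInter.mp hω n₀
      have hFsub : attractorOf m S Set.univ ω ⊆ ⋃ i, t i :=
        (Set.iInter_subset _ k).trans hcov
      have hd' : ∀ i, Metric.ediam (t i) ≤ r := fun i =>
        (hd i).trans (hle.trans (min_le_left _ _))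
      refine le_trans (iInf_le_of_le t (iInf_le_of_le hFsub (iInf_le_of_le hd' le_rfl))) ?_
      exact hs.trans (hle.trans (min_le_right _ _))
    exact hmk
  exact Filter.mem_of_superset
    ((countable_iInter_mem).mpr fun n => residual_of_dense_open (hopen n) (hdense n)) hsubset
end

section
/- For every $\omega \in \Omega$, the random attractor satisfies $\dim_P F_\omega = \overline{\dim}_B F_\omega$, i.e., the packing dimension and the upper box dimension of every random attractor of a RIFS of bi-Lipschitz contractions coincide. -/
open Metric MeasureTheory Filter Set
open scoped ENNReal NNReal

/-- `N_δ(F)`: the smallest number of open sets of diameter at most `δ` needed to cover `F`. -/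
noncomputable def coverNum {K : Type*} [MetricSpace K] (F : Set K) (δ : ℝ) : ℝ≥0∞ :=
  ⨅ (t : Finset (Set K)) (_ : ∀ U ∈ t, IsOpen U ∧ Metric.diam U ≤ δ) (_ : F ⊆ ⋃ U ∈ t, U),
    (t.card : ℝ≥0∞)

/-- Lower box(-counting) dimension. -/
noncomputable def lowerBoxDim {K : Type*} [MetricSpace K] (F : Set K) : ℝ≥0∞ :=
  Filter.liminf
    (fun δ : ℝ => ENNReal.ofReal (Real.log (coverNum F δ).toReal / -Real.log δ))
    (nhdsWithin 0 (Set.Ioi 0))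

/-- Upper box(-counting) dimension. -/
noncomputable def upperBoxDim {K : Type*} [MetricSpace K] (F : Set K) : ℝ≥0∞ :=
  Filter.limsup
    (fun δ : ℝ => ENNReal.ofReal (Real.log (coverNum F δ).toReal / -Real.log δ))
    (nhdsWithin 0 (Set.Ioi 0))

section helpers
variable {K : Type*} [MetricSpace K]

lemma le_of_forall_ofReal_lt {a b : ℝ≥0∞}
    (h : ∀ t : ℝ, 0 ≤ t → a < ENNReal.ofReal t → b ≤ ENNReal.ofReal t) : b ≤ a := by
  by_contra hab
  push_neg at hab
  obtain ⟨r, hr0, har, hrb⟩ := ENNReal.lt_iff_exists_real_btwn.1 hab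
  exact absurd (h r hr0 har) (not_le.2 hrb)

lemma ofReal_lt_of_lt_ofReal {a : ℝ≥0∞} {t u : ℝ} (h1 : a < ENNReal.ofReal t) (h2 : t < u) :
    a < ENNReal.ofReal u :=
  h1.trans_le (ENNReal.ofReal_le_ofReal h2.le)

lemma coverNum_mono {A B : Set K} (h : A ⊆ B) (δ : ℝ) : coverNum A δ ≤ coverNum B δ :=
  le_iInf₂ fun t ht => le_iInf fun hc => iInf₂_le_of_le t ht (iInf_le_of_le (h.trans hc) le_rfl)

lemma coverNum_anti (F : Set K) {δ δ' : ℝ} (h : δ ≤ δ') : coverNum F δ' ≤ coverNum F δ :=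
  le_iInf₂ fun t ht => le_iInf fun hc =>
    iInf₂_le_of_le t (fun U hU => ⟨(ht U hU).1, (ht U hU).2.trans h⟩) (iInf_le_of_le hc le_rfl)

lemma coverNum_exists_cover [CompactSpace K] (F : Set K) {δ : ℝ} (hδ : 0 < δ) :
    ∃ t : Finset (Set K), (∀ U ∈ t, IsOpen U ∧ Metric.diam U ≤ δ) ∧ F ⊆ ⋃ U ∈ t, U := by
  have hcov0 : (univ : Set K) ⊆ ⋃ x ∈ (univ : Set K), ball x (δ/3) := fun x _ =>
    mem_iUnion₂.2 ⟨x, mem_univ x, mem_ball_self (by linarith)⟩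
  obtain ⟨s, -, hsfin, hcov⟩ := IsCompact.elim_finite_subcover_image (isCompact_univ (X := K))
    (fun x (_ : x ∈ (univ : Set K)) => isOpen_ball (x := x) (ε := δ/3)) hcov0
  classical
  refine ⟨hsfin.toFinset.image (fun x => ball x (δ/3)), ?_, ?_⟩
  · intro U hU
    simp only [Finset.mem_image, Set.Finite.mem_toFinset] at hU
    obtain ⟨x, -, rfl⟩ := hU
    exact ⟨isOpen_ball, (diam_ball (by linarith)).trans (by linarith)⟩
  · intro x _
    have hx := hcov (mem_univ x)
    simp only [mem_iUnion] at hx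
    obtain ⟨i, hi, hxi⟩ := hx
    exact mem_iUnion₂.2 ⟨ball i (δ/3),
      Finset.mem_image_of_mem _ (hsfin.mem_toFinset.2 hi), hxi⟩

lemma coverNum_lt_top [CompactSpace K] (F : Set K) {δ : ℝ} (hδ : 0 < δ) :
    coverNum F δ < ⊤ := by
  obtain ⟨t, ht, hc⟩ := coverNum_exists_cover F hδ
  exact lt_of_le_of_lt (iInf₂_le_of_le t ht (iInf_le_of_le hc le_rfl))
    (ENNReal.natCast_lt_top _)

lemma one_le_coverNum {F : Set K} (h : F.Nonempty) (δ : ℝ) : 1 ≤ coverNum F δ := by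
  refine le_iInf₂ fun t ht => le_iInf fun hc => ?_
  obtain ⟨x, hx⟩ := h
  obtain ⟨U, hU, -⟩ := mem_iUnion₂.1 (hc hx)
  exact_mod_cast Finset.card_pos.2 ⟨U, hU⟩

lemma card_le_coverNum [CompactSpace K] {F : Set K} {T : Finset K} {ρ δ : ℝ} (hT : ↑T ⊆ F)
    (hsep : ∀ x ∈ T, ∀ y ∈ T, x ≠ y → ρ ≤ dist x y) (hδ : δ < ρ) :
    (T.card : ℝ≥0∞) ≤ coverNum F δ := by
  classical
  refine le_iInf₂ fun t ht => le_iInf fun hc => ?_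
  have hex : ∀ x ∈ T, ∃ U ∈ t, x ∈ U := fun x hx => by
    obtain ⟨U, hU, hxU⟩ := mem_iUnion₂.1 (hc (hT hx)); exact ⟨U, hU, hxU⟩
  have hcard : T.card ≤ t.card := by
    refine Finset.card_le_card_of_injOn
      (fun x => if h : x ∈ T then (hex x h).choose else ∅) (fun a ha => ?_) ?_
    · simp only [Finset.mem_coe] at ha; simp only [dif_pos ha]; exact (hex a ha).choose_spec.1
    · intro x hx y hy hxy
      simp only [Finset.mem_coe] at hx hy
      simp only [dif_pos hx, dif_pos hy] at hxy
      by_contra hne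
      have hxU : x ∈ (hex x hx).choose := (hex x hx).choose_spec.2
      have hyU : y ∈ (hex x hx).choose := hxy ▸ (hex y hy).choose_spec.2
      have hd : dist x y ≤ Metric.diam ((hex x hx).choose) :=
        Metric.dist_le_diam_of_mem isBounded_of_compactSpace hxU hyU
      have := (ht _ (hex x hx).choose_spec.1).2
      have := hsep x hx y hy hne
      linarith
  exact_mod_cast hcard

/-- Existence of a large `ρ`-separated subset realizing the covering number at scale `2ρ`. -/
lemma exists_separated [CompactSpace K] {F : Set K} (hF : F.Nonempty) {ρ : ℝ} (hρ : 0 < ρ) :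
    ∃ T : Finset K, ↑T ⊆ F ∧ (∀ x ∈ T, ∀ y ∈ T, x ≠ y → ρ ≤ dist x y) ∧
      coverNum F (2 * ρ) ≤ T.card := by
  classical
  -- global bound on separated sets
  obtain ⟨t₀, ht₀, hc₀⟩ := coverNum_exists_cover (univ : Set K) (show (0:ℝ) < ρ/2 by linarith)
  have hbound : ∀ T : Finset K, (∀ x ∈ T, ∀ y ∈ T, x ≠ y → ρ ≤ dist x y) → T.card ≤ t₀.card := by
    intro T hsep
    have := card_le_coverNum (F := (univ : Set K)) (T := T) (ρ := ρ) (δ := ρ/2)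
      (by simp) hsep (by linarith)
    have h2 : coverNum (univ : Set K) (ρ/2) ≤ t₀.card :=
      iInf₂_le_of_le t₀ ht₀ (iInf_le_of_le hc₀ le_rfl)
    exact_mod_cast this.trans h2
  set P : ℕ → Prop := fun n => ∃ T : Finset K, ↑T ⊆ F ∧
      (∀ x ∈ T, ∀ y ∈ T, x ≠ y → ρ ≤ dist x y) ∧ T.card = n with hP
  have hP1 : P 1 := by
    obtain ⟨x, hx⟩ := hF
    exact ⟨{x}, by simpa using hx, by simp, by simp⟩
  have h1B : 1 ≤ t₀.card := by
    obtain ⟨T, _, hsep, hcard⟩ := hP1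
    have := hbound T hsep; omega
  set n₀ := Nat.findGreatest P t₀.card with hn₀
  have hPn₀ : P n₀ := Nat.findGreatest_spec h1B hP1
  obtain ⟨T, hTF, hsep, hTcard⟩ := hPn₀
  refine ⟨T, hTF, hsep, ?_⟩
  -- maximality: every point of F is within ρ of T
  have hmax : ∀ a ∈ F, ∃ x ∈ T, dist a x < ρ := by
    intro a ha
    by_contra hno
    push_neg at hno
    have haT : a ∉ T := fun h => absurd (hno a h) (not_le.2 (by simpa using hρ))
    have hsep' : ∀ x ∈ insert a T, ∀ y ∈ insert a T, x ≠ y → ρ ≤ dist x y := by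
      intro x hx y hy hne
      rcases Finset.mem_insert.1 hx with hx' | hx
      · rcases Finset.mem_insert.1 hy with hy' | hy
        · exact absurd (hx'.trans hy'.symm) hne
        · rw [hx']; exact hno y hy
      · rcases Finset.mem_insert.1 hy with hy' | hy
        · rw [hy', dist_comm]; exact hno x hx
        · exact hsep x hx y hy hne
    have hcard' : (insert a T).card = n₀ + 1 := by
      rw [Finset.card_insert_of_notMem haT, hTcard]
    have : P (n₀ + 1) := ⟨insert a T, by
        intro z hz
        rcases Finset.mem_insert.1 hz with rfl | hz
        · exact ha
        · exact hTF hz, hsep', hcard'⟩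
    have hle : n₀ + 1 ≤ t₀.card := by
      have := hbound (insert a T) hsep'; omega
    exact absurd this (Nat.findGreatest_is_greatest (by omega) hle)
  -- T-balls of radius ρ cover F
  have : coverNum F (2*ρ) ≤ T.card := by
    refine iInf₂_le_of_le (T.image (fun x => ball x ρ)) ?_ (iInf_le_of_le ?_ ?_)
    · intro U hU
      simp only [Finset.mem_image] at hU
      obtain ⟨x, -, rfl⟩ := hU
      exact ⟨isOpen_ball, diam_ball hρ.le⟩
    · intro a ha
      obtain ⟨x, hx, hax⟩ := hmax a ha
      exact mem_iUnion₂.2 ⟨ball x ρ, Finset.mem_image_of_mem _ hx, by simpa [mem_ball] using hax⟩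
    · exact_mod_cast Finset.card_image_le
  exact this
end helpers

section criteria
variable {K : Type*} [MetricSpace K]

lemma aux_ev : ∀ᶠ δ in nhdsWithin (0:ℝ) (Set.Ioi 0), 0 < δ ∧ δ < 1 := by
  filter_upwards [Ioo_mem_nhdsGT zero_lt_one] with δ hδ
  exact ⟨hδ.1, hδ.2⟩

lemma neg_log_pos {δ : ℝ} (h0 : 0 < δ) (h1 : δ < 1) : 0 < -Real.log δ := by
  have := Real.log_neg h0 h1; linarith

lemma upperBoxDim_le_of_ev {F : Set K} {t : ℝ} (ht : 0 ≤ t)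
    (h : ∀ᶠ δ in nhdsWithin (0:ℝ) (Set.Ioi 0), coverNum F δ ≤ ENNReal.ofReal (δ ^ (-t))) :
    upperBoxDim F ≤ ENNReal.ofReal t := by
  refine Filter.limsup_le_of_le Filter.isCobounded_le_of_bot ?_
  filter_upwards [h, aux_ev] with δ hδ hδ1
  refine ENNReal.ofReal_le_ofReal ?_
  have hlogδ : 0 < -Real.log δ := neg_log_pos hδ1.1 hδ1.2
  rw [div_le_iff₀ hlogδ]
  have hNle : (coverNum F δ).toReal ≤ δ ^ (-t) :=
    ENNReal.toReal_le_of_le_ofReal (Real.rpow_nonneg hδ1.1.le _) hδ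
  rcases le_or_gt (coverNum F δ).toReal 1 with hN1 | hN1
  · have : Real.log (coverNum F δ).toReal ≤ 0 := Real.log_nonpos ENNReal.toReal_nonneg hN1
    nlinarith [mul_nonneg ht hlogδ.le]
  · have : Real.log (coverNum F δ).toReal ≤ Real.log (δ ^ (-t)) :=
      (Real.log_le_log_iff (by linarith) (Real.rpow_pos_of_pos hδ1.1 _)).2 hNle
    rw [Real.log_rpow hδ1.1] at this
    nlinarith

lemma ev_coverNum_le [CompactSpace K] {F : Set K} {t : ℝ}
    (h : upperBoxDim F < ENNReal.ofReal t) :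
    ∀ᶠ δ in nhdsWithin (0:ℝ) (Set.Ioi 0), coverNum F δ ≤ ENNReal.ofReal (δ ^ (-t)) := by
  have ht : 0 < t := by
    by_contra h0; push_neg at h0
    rw [ENNReal.ofReal_eq_zero.2 h0] at h
    exact absurd h (by simp)
  have hev := Filter.eventually_lt_of_limsup_lt h
    (Filter.isBoundedUnder_of ⟨⊤, fun _ => le_top⟩)
  filter_upwards [hev, aux_ev] with δ hq hδ1
  have hlogδ : 0 < -Real.log δ := neg_log_pos hδ1.1 hδ1.2
  have hq' : Real.log (coverNum F δ).toReal / -Real.log δ < t :=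
    (ENNReal.ofReal_lt_ofReal_iff ht).1 hq
  rw [div_lt_iff₀ hlogδ] at hq'
  have hfin := coverNum_lt_top F hδ1.1
  rw [← ENNReal.ofReal_toReal hfin.ne]
  refine ENNReal.ofReal_le_ofReal ?_
  rcases eq_or_lt_of_le (ENNReal.toReal_nonneg (a := coverNum F δ)) with h0 | h0
  · rw [← h0]; exact Real.rpow_nonneg hδ1.1.le _
  · have : Real.log (coverNum F δ).toReal < Real.log (δ ^ (-t)) := by
      rw [Real.log_rpow hδ1.1]; nlinarith
    exact ((Real.log_lt_log_iff h0 (Real.rpow_pos_of_pos hδ1.1 _)).1 this).le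

lemma le_upperBoxDim_of_freq [CompactSpace K] {F : Set K} {t : ℝ} (ht : 0 ≤ t)
    (h : ∃ᶠ δ in nhdsWithin (0:ℝ) (Set.Ioi 0), ENNReal.ofReal (δ ^ (-t)) ≤ coverNum F δ) :
    ENNReal.ofReal t ≤ upperBoxDim F := by
  refine Filter.le_limsup_of_frequently_le ?_ (Filter.isBoundedUnder_of ⟨⊤, fun _ => le_top⟩)
  refine (h.and_eventually aux_ev).mono ?_
  rintro δ ⟨hN, hδ0, hδ1⟩
  refine ENNReal.ofReal_le_ofReal ?_
  have hlogδ : 0 < -Real.log δ := neg_log_pos hδ0 hδ1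
  rw [le_div_iff₀ hlogδ]
  have hfin := coverNum_lt_top F hδ0
  have h1 : δ ^ (-t) ≤ (coverNum F δ).toReal := by
    have h2 := ENNReal.toReal_mono hfin.ne hN
    rwa [ENNReal.toReal_ofReal (Real.rpow_nonneg hδ0.le _)] at h2
  have h3 : Real.log (δ ^ (-t)) ≤ Real.log (coverNum F δ).toReal :=
    (Real.log_le_log_iff (Real.rpow_pos_of_pos hδ0 _)
      (lt_of_lt_of_le (Real.rpow_pos_of_pos hδ0 _) h1)).2 h1
  rw [Real.log_rpow hδ0] at h3
  nlinarith

lemma freq_le_coverNum [CompactSpace K] {F : Set K} {t : ℝ} (ht : 0 ≤ t)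
    (h : ENNReal.ofReal t < upperBoxDim F) :
    ∃ᶠ δ in nhdsWithin (0:ℝ) (Set.Ioi 0), ENNReal.ofReal (δ ^ (-t)) ≤ coverNum F δ := by
  have hfreq := Filter.frequently_lt_of_lt_limsup Filter.isCobounded_le_of_bot h
  refine (hfreq.and_eventually aux_ev).mono ?_
  rintro δ ⟨hq, hδ0, hδ1⟩
  have htq : t < Real.log (coverNum F δ).toReal / -Real.log δ := by
    by_contra hc; push_neg at hc
    exact absurd (ENNReal.ofReal_le_ofReal hc) (not_le.2 hq)
  have hlogδ : 0 < -Real.log δ := neg_log_pos hδ0 hδ1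
  rw [lt_div_iff₀ hlogδ] at htq
  have hNpos : 0 < (coverNum F δ).toReal := by
    by_contra h0; push_neg at h0
    have h0' : (coverNum F δ).toReal = 0 := le_antisymm h0 ENNReal.toReal_nonneg
    rw [h0', Real.log_zero] at htq
    nlinarith [mul_nonneg ht hlogδ.le]
  have hle : δ ^ (-t) ≤ (coverNum F δ).toReal := by
    have hlog : Real.log (δ ^ (-t)) < Real.log (coverNum F δ).toReal := by
      rw [Real.log_rpow hδ0]; nlinarith
    exact ((Real.log_lt_log_iff (Real.rpow_pos_of_pos hδ0 _) hNpos).1 hlog).le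
  calc ENNReal.ofReal (δ ^ (-t)) ≤ ENNReal.ofReal (coverNum F δ).toReal :=
        ENNReal.ofReal_le_ofReal hle
    _ = coverNum F δ := ENNReal.ofReal_toReal (coverNum_lt_top F hδ0).ne

end criteria

section transfer
variable {K : Type*} [MetricSpace K]

lemma tendsto_mul_pos {a : ℝ} (ha : 0 < a) :
    Filter.Tendsto (fun δ : ℝ => a * δ) (nhdsWithin 0 (Set.Ioi 0)) (nhdsWithin 0 (Set.Ioi 0)) := by
  refine tendsto_nhdsWithin_of_tendsto_nhds_of_eventually_within _ ?_ ?_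
  · have hco : Continuous (fun δ : ℝ => a * δ) := continuous_const.mul continuous_id
    have h0 : Filter.Tendsto (fun δ : ℝ => a * δ) (nhds 0) (nhds 0) := by
      simpa using hco.tendsto 0
    exact h0.mono_left nhdsWithin_le_nhds
  · filter_upwards [eventually_mem_nhdsWithin] with δ (hδ : δ ∈ Set.Ioi 0)
    exact mul_pos ha hδ

lemma tendsto_rpow_neg_zero {a : ℝ} (ha : 0 < a) :
    Filter.Tendsto (fun δ : ℝ => δ ^ (-a)) (nhdsWithin 0 (Set.Ioi 0)) Filter.atTop := by
  have h1 : Filter.Tendsto (fun δ : ℝ => (δ⁻¹) ^ a) (nhdsWithin 0 (Set.Ioi 0)) Filter.atTop :=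
    (tendsto_rpow_atTop ha).comp tendsto_inv_nhdsGT_zero
  refine Filter.Tendsto.congr' ?_ h1
  filter_upwards [eventually_mem_nhdsWithin] with δ (hδ : δ ∈ Set.Ioi 0)
  rw [Real.inv_rpow (le_of_lt hδ), ← Real.rpow_neg (le_of_lt hδ)]

lemma ev_mul_rpow_le {C t t' : ℝ} (hC : 0 < C) (h : t < t') :
    ∀ᶠ δ in nhdsWithin (0:ℝ) (Set.Ioi 0), C * δ ^ (-t) ≤ δ ^ (-t') := by
  have ha : 0 < t' - t := by linarith
  have h1 := (tendsto_rpow_neg_zero ha).eventually_ge_atTop C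
  filter_upwards [h1, aux_ev] with δ hδC hδ1
  have heq : δ ^ (-t') = δ ^ (-(t'-t)) * δ ^ (-t) := by
    rw [← Real.rpow_add hδ1.1]; ring_nf
  rw [heq]
  have h2 := Real.rpow_nonneg hδ1.1.le (-t)
  nlinarith

lemma ofReal_lt_real_of_lt {t u : ℝ} (h1 : ENNReal.ofReal t < ENNReal.ofReal u) : t < u := by
  by_contra hc; push_neg at hc
  exact absurd (ENNReal.ofReal_le_ofReal hc) (not_le.2 h1)

lemma upperBoxDim_le_of_coverNum_le [CompactSpace K] {A B : Set K} {a : ℝ} (ha : 0 < a)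
    (h : ∀ᶠ δ in nhdsWithin (0:ℝ) (Set.Ioi 0), coverNum A δ ≤ coverNum B (a*δ)) :
    upperBoxDim A ≤ upperBoxDim B := by
  refine le_of_forall_ofReal_lt fun t ht htB => ?_
  obtain ⟨t₀, ht₀0, hBt₀, ht₀t⟩ := ENNReal.lt_iff_exists_real_btwn.1 htB
  have ht₀t' : t₀ < t := ofReal_lt_real_of_lt ht₀t
  have hev := ev_coverNum_le hBt₀
  have hev2 : ∀ᶠ δ in nhdsWithin (0:ℝ) (Set.Ioi 0),
      coverNum B (a*δ) ≤ ENNReal.ofReal ((a*δ) ^ (-t₀)) := (tendsto_mul_pos ha).eventually hev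
  refine upperBoxDim_le_of_ev ht ?_
  filter_upwards [h, hev2, ev_mul_rpow_le (Real.rpow_pos_of_pos ha (-t₀)) ht₀t',
    eventually_mem_nhdsWithin] with δ h1 h2 h3 (hδ : δ ∈ Set.Ioi 0)
  refine (h1.trans h2).trans ?_
  rw [Real.mul_rpow ha.le (le_of_lt hδ)]
  exact ENNReal.ofReal_le_ofReal h3

lemma upperBoxDim_mono [CompactSpace K] {A B : Set K} (h : A ⊆ B) :
    upperBoxDim A ≤ upperBoxDim B := by
  refine upperBoxDim_le_of_coverNum_le one_pos (Filter.Eventually.of_forall fun δ => ?_)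
  rw [one_mul]; exact coverNum_mono h δ

lemma coverNum_witness [CompactSpace K] (F : Set K) {δ : ℝ} (hδ : 0 < δ) :
    ∃ t : Finset (Set K), (∀ U ∈ t, IsOpen U ∧ Metric.diam U ≤ δ) ∧ (F ⊆ ⋃ U ∈ t, U) ∧
      (t.card : ℝ≥0∞) = coverNum F δ := by
  classical
  have hex : ∃ n : ℕ, ∃ t : Finset (Set K),
      (∀ U ∈ t, IsOpen U ∧ Metric.diam U ≤ δ) ∧ (F ⊆ ⋃ U ∈ t, U) ∧ t.card = n := by
    obtain ⟨t, h1, h2⟩ := coverNum_exists_cover F hδ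
    exact ⟨t.card, t, h1, h2, rfl⟩
  obtain ⟨t, h1, h2, h3⟩ := Nat.find_spec hex
  refine ⟨t, h1, h2, le_antisymm ?_ (iInf₂_le_of_le t h1 (iInf_le_of_le h2 (by rw [h3])))⟩
  rw [h3]
  refine le_iInf₂ fun t' ht' => le_iInf fun hc' => ?_
  have : Nat.find hex ≤ t'.card := Nat.find_le ⟨t', ht', hc', rfl⟩
  exact_mod_cast this

lemma coverNum_iUnion_le [CompactSpace K] {ι : Type*} [Fintype ι] (A : ι → Set K) {δ : ℝ}
    (hδ : 0 < δ) : coverNum (⋃ i, A i) δ ≤ ∑ i, coverNum (A i) δ := by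
  classical
  choose t ht hc hcard using fun i => coverNum_witness (A i) hδ
  have h1 : coverNum (⋃ i, A i) δ ≤ ((Finset.univ.biUnion t).card : ℝ≥0∞) := by
    refine iInf₂_le_of_le _ ?_ (iInf_le_of_le ?_ le_rfl)
    · intro U hU
      obtain ⟨i, -, hUi⟩ := Finset.mem_biUnion.1 hU
      exact ht i U hUi
    · intro x hx
      obtain ⟨i, hxi⟩ := mem_iUnion.1 hx
      obtain ⟨U, hU, hxU⟩ := mem_iUnion₂.1 (hc i hxi)
      exact mem_iUnion₂.2 ⟨U, Finset.mem_biUnion.2 ⟨i, Finset.mem_univ i, hU⟩, hxU⟩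
  refine h1.trans ?_
  have h2 : ((Finset.univ.biUnion t).card : ℝ≥0∞) ≤ ∑ i, ((t i).card : ℝ≥0∞) := by
    have := Finset.card_biUnion_le (s := Finset.univ) (t := t)
    exact_mod_cast this
  exact h2.trans (le_of_eq (Finset.sum_congr rfl fun i _ => hcard i))

lemma upperBoxDim_iUnion_le [CompactSpace K] {ι : Type*} [Fintype ι] (A : ι → Set K) :
    upperBoxDim (⋃ i, A i) ≤ ⨆ i, upperBoxDim (A i) := by
  refine le_of_forall_ofReal_lt fun t ht hsup => ?_
  obtain ⟨t₀, ht₀0, hsup₀, ht₀t⟩ := ENNReal.lt_iff_exists_real_btwn.1 hsup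
  have ht₀t' : t₀ < t := ofReal_lt_real_of_lt ht₀t
  have hev : ∀ i, ∀ᶠ δ in nhdsWithin (0:ℝ) (Set.Ioi 0),
      coverNum (A i) δ ≤ ENNReal.ofReal (δ ^ (-t₀)) :=
    fun i => ev_coverNum_le (lt_of_le_of_lt (le_iSup (fun i => upperBoxDim (A i)) i) hsup₀)
  have hcpos : (0:ℝ) < (Fintype.card ι : ℝ) + 1 := by positivity
  refine upperBoxDim_le_of_ev ht ?_
  filter_upwards [Filter.eventually_all.2 hev, ev_mul_rpow_le hcpos ht₀t',
    eventually_mem_nhdsWithin] with δ h1 h2 (hδ : δ ∈ Set.Ioi 0)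
  calc coverNum (⋃ i, A i) δ ≤ ∑ i, coverNum (A i) δ := coverNum_iUnion_le A hδ
    _ ≤ ∑ _i : ι, ENNReal.ofReal (δ ^ (-t₀)) := Finset.sum_le_sum fun i _ => h1 i
    _ = (Fintype.card ι : ℝ≥0∞) * ENNReal.ofReal (δ ^ (-t₀)) := by
        simp [Finset.sum_const, nsmul_eq_mul]
    _ ≤ ENNReal.ofReal (((Fintype.card ι : ℝ) + 1) * δ ^ (-t₀)) := by
        rw [ENNReal.ofReal_mul (by positivity)]
        refine mul_le_mul_left ?_ _
        rw [← ENNReal.ofReal_natCast (Fintype.card ι)]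
        exact ENNReal.ofReal_le_ofReal (by linarith)
    _ ≤ ENNReal.ofReal (δ ^ (-t)) := ENNReal.ofReal_le_ofReal h2

lemma coverNum_image_le [CompactSpace K] {f : K → K} {C : ℝ} (hC : 0 < C)
    (hf : ∀ x y, dist (f x) (f y) ≤ C * dist x y) (A : Set K) {δ : ℝ} (hδ : 0 < δ) :
    coverNum (f '' A) (3*C*δ) ≤ coverNum A δ := by
  classical
  refine le_iInf₂ fun t ht => le_iInf fun hc => ?_
  set V : Set K → Set K := fun U =>
    if h : (U ∩ A).Nonempty then ball (f h.choose) (3*C*δ/2) else ∅ with hV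
  have hcard : ((t.image V).card : ℝ≥0∞) ≤ (t.card : ℝ≥0∞) := by
    exact_mod_cast Finset.card_image_le
  refine le_trans (iInf₂_le_of_le (t.image V) ?_ (iInf_le_of_le ?_ le_rfl)) hcard
  · intro U hU
    obtain ⟨W, -, rfl⟩ := Finset.mem_image.1 hU
    by_cases h : (W ∩ A).Nonempty
    · rw [hV]; simp only [dif_pos h]
      exact ⟨isOpen_ball, (diam_ball (by positivity)).trans (by linarith)⟩
    · rw [hV]; simp only [dif_neg h]
      exact ⟨isOpen_empty, by simp; positivity⟩
  · rintro y ⟨x, hxA, rfl⟩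
    obtain ⟨U, hU, hxU⟩ := mem_iUnion₂.1 (hc hxA)
    have hne : (U ∩ A).Nonempty := ⟨x, hxU, hxA⟩
    refine mem_iUnion₂.2 ⟨V U, Finset.mem_image_of_mem V hU, ?_⟩
    rw [hV]; simp only [dif_pos hne]
    have hx2 : hne.choose ∈ U := hne.choose_spec.1
    have hd : dist x hne.choose ≤ Metric.diam U :=
      Metric.dist_le_diam_of_mem isBounded_of_compactSpace hxU hx2
    have : dist (f x) (f hne.choose) ≤ C * δ :=
      (hf x hne.choose).trans (by nlinarith [(ht U hU).2])
    rw [mem_ball]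
    nlinarith

lemma coverNum_le_image [CompactSpace K] {f : K → K} {c : ℝ} (hc : 0 < c)
    (hf : ∀ x y, c * dist x y ≤ dist (f x) (f y)) (hcont : Continuous f) (A : Set K) {δ : ℝ}
    (hδ : 0 ≤ δ) : coverNum A δ ≤ coverNum (f '' A) (c*δ) := by
  classical
  refine le_iInf₂ fun t ht => le_iInf fun hc' => ?_
  have hcard : ((t.image (f ⁻¹' ·)).card : ℝ≥0∞) ≤ (t.card : ℝ≥0∞) := by
    exact_mod_cast Finset.card_image_le
  refine le_trans (iInf₂_le_of_le (t.image (f ⁻¹' ·)) ?_ (iInf_le_of_le ?_ le_rfl)) hcard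
  · intro U hU
    obtain ⟨W, hW, rfl⟩ := Finset.mem_image.1 hU
    refine ⟨(ht W hW).1.preimage hcont, ?_⟩
    refine Metric.diam_le_of_forall_dist_le hδ fun x hx y hy => ?_
    have h1 : dist (f x) (f y) ≤ Metric.diam W :=
      Metric.dist_le_diam_of_mem isBounded_of_compactSpace hx hy
    have := (hf x y).trans h1
    have h2 := (ht W hW).2
    nlinarith
  · intro x hx
    obtain ⟨U, hU, hxU⟩ := mem_iUnion₂.1 (hc' ⟨x, hx, rfl⟩)
    exact mem_iUnion₂.2 ⟨f ⁻¹' U, Finset.mem_image_of_mem _ hU, hxU⟩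

end transfer

section imagedim
variable {K : Type*} [MetricSpace K]

lemma upperBoxDim_image_eq [CompactSpace K] {f : K → K} {c C : ℝ} (hc : 0 < c) (hC : 0 < C)
    (hf : ∀ x y, c * dist x y ≤ dist (f x) (f y) ∧ dist (f x) (f y) ≤ C * dist x y) (A : Set K) :
    upperBoxDim (f '' A) = upperBoxDim A := by
  have hcont : Continuous f :=
    (LipschitzWith.of_dist_le_mul (K := C.toNNReal) (f := f) (fun x y => by
      refine (hf x y).2.trans ?_
      rw [Real.coe_toNNReal C hC.le])).continuous
  apply le_antisymm
  · refine upperBoxDim_le_of_coverNum_le (a := (3*C)⁻¹) (inv_pos.2 (by linarith)) ?_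
    filter_upwards [eventually_mem_nhdsWithin] with δ (hδ : δ ∈ Set.Ioi 0)
    have h := coverNum_image_le hC (fun x y => (hf x y).2) A (δ := (3*C)⁻¹ * δ)
      (mul_pos (inv_pos.2 (by linarith)) hδ)
    rwa [show 3*C*((3*C)⁻¹*δ) = δ by field_simp] at h
  · refine upperBoxDim_le_of_coverNum_le (a := c) hc ?_
    filter_upwards [eventually_mem_nhdsWithin] with δ (hδ : δ ∈ Set.Ioi 0)
    exact coverNum_le_image hc (fun x y => (hf x y).1) hcont A (le_of_lt hδ)
end imagedim

section attractor
variable {K : Type*} [MetricSpace K] [CompactSpace K] [Nonempty K]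
variable {N : ℕ} {m : Fin N → ℕ} {S : ∀ i, Fin (m i) → K → K}

lemma biLip_continuous {φ : K → K} (h : IsBiLipContraction φ) : Continuous φ := by
  obtain ⟨c, C, hc, hC1, hb⟩ := h
  rcases le_or_gt C 0 with hC0 | hC0
  · have : ∀ x y : K, φ x = φ y := fun x y => by
      have h1 := (hb x y).2
      have h2 := dist_nonneg (x := φ x) (y := φ y)
      have h3 := dist_nonneg (x := x) (y := y)
      have : dist (φ x) (φ y) = 0 := le_antisymm (h1.trans (by nlinarith)) h2
      exact dist_eq_zero.1 this
    exact continuous_of_const fun x y => this x y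
  · exact (LipschitzWith.of_dist_le_mul (K := C.toNNReal) (f := φ) (fun x y => by
      refine (hb x y).2.trans ?_
      rw [Real.coe_toNNReal C hC0.le])).continuous

lemma biLip_injective {φ : K → K} (h : IsBiLipContraction φ) : Function.Injective φ := by
  obtain ⟨c, C, hc, hC1, hb⟩ := h
  intro x y hxy
  have h1 := (hb x y).1
  rw [hxy, dist_self] at h1
  have := dist_nonneg (x := x) (y := y)
  have : dist x y = 0 := by nlinarith
  exact dist_eq_zero.1 this


lemma levelSets_nonempty (hm : ∀ i, 0 < m i) : ∀ (k : ℕ) (ω : ℕ → Fin N), (levelSets m S Set.univ ω k).Nonempty := by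
  intro k
  induction k with
  | zero => intro ω; exact univ_nonempty
  | succ k ih =>
    intro ω
    obtain ⟨y, hy⟩ := ih (fun n => ω (n+1))
    exact ⟨S (ω 0) ⟨0, hm (ω 0)⟩ y, mem_iUnion.2 ⟨⟨0, hm (ω 0)⟩, mem_image_of_mem _ hy⟩⟩

lemma levelSets_isCompact (hS : ∀ i j, IsBiLipContraction (S i j)) : ∀ (k : ℕ) (ω : ℕ → Fin N), IsCompact (levelSets m S Set.univ ω k) := by
  intro k
  induction k with
  | zero => intro ω; exact isCompact_univ
  | succ k ih =>
    intro ω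
    exact isCompact_iUnion fun j => ((ih _).image (biLip_continuous (hS _ j)))

lemma levelSets_succ_subset :
    ∀ (k : ℕ) (ω : ℕ → Fin N), levelSets m S Set.univ ω (k+1) ⊆ levelSets m S Set.univ ω k := by
  intro k
  induction k with
  | zero => intro ω; exact fun x _ => mem_univ x
  | succ k ih =>
    intro ω
    refine iUnion_subset fun j => ?_
    exact (image_mono (ih (fun n => ω (n+1)))).trans (subset_iUnion_of_subset j le_rfl)

lemma levelSets_anti {k k' : ℕ} (h : k ≤ k') (ω : ℕ → Fin N) :
    levelSets m S Set.univ ω k' ⊆ levelSets m S Set.univ ω k := by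
  have := antitone_nat_of_succ_le (f := fun k => levelSets m S Set.univ ω k)
    (fun n => levelSets_succ_subset n ω)
  exact this h

lemma attractor_isCompact (hS : ∀ i j, IsBiLipContraction (S i j)) (ω : ℕ → Fin N) : IsCompact (attractorOf m S Set.univ ω) := by
  refine IsClosed.isCompact (isClosed_iInter fun k => ((levelSets_isCompact hS k ω).isClosed))

lemma attractor_nonempty (hm : ∀ i, 0 < m i) (hS : ∀ i j, IsBiLipContraction (S i j)) (ω : ℕ → Fin N) : (attractorOf m S Set.univ ω).Nonempty := by
  refine IsCompact.nonempty_iInter_of_sequence_nonempty_isCompact_isClosed _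
    (fun k => levelSets_succ_subset k ω) (fun k => levelSets_nonempty hm k ω)
    (levelSets_isCompact hS 0 ω) (fun k => (levelSets_isCompact hS k ω).isClosed)

lemma attractor_eq_union (hm : ∀ i, 0 < m i) (hS : ∀ i j, IsBiLipContraction (S i j)) (ω : ℕ → Fin N) :
    attractorOf m S Set.univ ω
      = ⋃ j : Fin (m (ω 0)), S (ω 0) j '' attractorOf m S Set.univ (fun n => ω (n+1)) := by
  apply Subset.antisymm
  · intro x hx
    have hx' : ∀ k, x ∈ levelSets m S Set.univ ω k := fun k => mem_iInter.1 hx k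
    have hch : ∀ n : ℕ, ∃ j : Fin (m (ω 0)),
        x ∈ S (ω 0) j '' levelSets m S Set.univ (fun n => ω (n+1)) n := by
      intro n
      have := hx' (n+1)
      exact mem_iUnion.1 this
    choose g hg using hch
    have : Nonempty (Fin (m (ω 0))) := ⟨⟨0, hm (ω 0)⟩⟩
    obtain ⟨j₀, hj₀⟩ := Finite.exists_infinite_fiber g
    have hfib : (g ⁻¹' {j₀}).Infinite := Set.infinite_coe_iff.1 hj₀
    have hall : ∀ n, x ∈ S (ω 0) j₀ '' levelSets m S Set.univ (fun n => ω (n+1)) n := by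
      intro n
      obtain ⟨n', hn', hnn'⟩ := hfib.exists_gt n
      have : g n' = j₀ := hn'
      have hx2 := hg n'
      rw [this] at hx2
      exact (image_mono (levelSets_anti (le_of_lt hnn') _)) hx2
    have hinj := biLip_injective (hS (ω 0) j₀)
    have : x ∈ ⋂ n, S (ω 0) j₀ '' levelSets m S Set.univ (fun n => ω (n+1)) n :=
      mem_iInter.2 hall
    rw [← InjOn.image_iInter_eq (hinj.injOn.mono (subset_univ _))] at this
    exact mem_iUnion.2 ⟨j₀, this⟩
  · refine iUnion_subset fun j => ?_
    rintro z ⟨y, hy, rfl⟩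
    refine mem_iInter.2 fun k => ?_
    cases k with
    | zero => exact mem_univ _
    | succ k =>
      exact mem_iUnion.2 ⟨j, mem_image_of_mem _ (mem_iInter.1 hy k)⟩

end attractor

section attractor2
variable {K : Type*} [MetricSpace K] [CompactSpace K] [Nonempty K]
variable {N : ℕ} {m : Fin N → ℕ} {S : ∀ i, Fin (m i) → K → K}

lemma image_dim_biLip {φ : K → K} (h : IsBiLipContraction φ) (A : Set K) :
    upperBoxDim (φ '' A) = upperBoxDim A := by
  obtain ⟨c, C, hc, hC1, hb⟩ := h
  by_cases hK : ∃ x y : K, x ≠ y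
  · obtain ⟨x, y, hxy⟩ := hK
    have hd : 0 < dist x y := dist_pos.2 hxy
    have hC0 : 0 < C := by nlinarith [(hb x y).1, (hb x y).2]
    exact upperBoxDim_image_eq hc hC0 hb A
  · push_neg at hK
    have himg : φ '' A = A := by
      ext z
      constructor
      · rintro ⟨a, ha, rfl⟩
        rwa [hK (φ a) a]
      · intro hz
        exact ⟨z, hz, (hK (φ z) z)⟩
    rw [himg]

lemma attractor_dim_shift (hm : ∀ i, 0 < m i) (hS : ∀ i j, IsBiLipContraction (S i j))
    (ω : ℕ → Fin N) :
    upperBoxDim (attractorOf m S Set.univ (fun n => ω (n+1)))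
      = upperBoxDim (attractorOf m S Set.univ ω) := by
  have hnonempty : Nonempty (Fin (m (ω 0))) := ⟨⟨0, hm (ω 0)⟩⟩
  apply le_antisymm
  · have h1 : S (ω 0) ⟨0, hm (ω 0)⟩ '' attractorOf m S Set.univ (fun n => ω (n+1))
        ⊆ attractorOf m S Set.univ ω := by
      rw [attractor_eq_union hm hS ω]
      exact subset_iUnion_of_subset ⟨0, hm (ω 0)⟩ le_rfl
    calc upperBoxDim (attractorOf m S Set.univ (fun n => ω (n+1)))
        = upperBoxDim (S (ω 0) ⟨0, hm (ω 0)⟩ '' attractorOf m S Set.univ (fun n => ω (n+1))) :=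
          (image_dim_biLip (hS _ _) _).symm
      _ ≤ upperBoxDim (attractorOf m S Set.univ ω) := upperBoxDim_mono h1
  · rw [attractor_eq_union hm hS ω]
    refine (upperBoxDim_iUnion_le _).trans ?_
    refine iSup_le fun j => ?_
    rw [image_dim_biLip (hS _ _) _]

lemma attractor_dim_iterate (hm : ∀ i, 0 < m i) (hS : ∀ i j, IsBiLipContraction (S i j)) :
    ∀ (k : ℕ) (ω : ℕ → Fin N),
      upperBoxDim (attractorOf m S Set.univ ((fun (ω' : ℕ → Fin N) n => ω' (n+1))^[k] ω))
        = upperBoxDim (attractorOf m S Set.univ ω) := by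
  intro k
  induction k with
  | zero => intro ω; rfl
  | succ k ih =>
    intro ω
    rw [Function.iterate_succ_apply]
    rw [ih (fun n => ω (n+1))]
    exact attractor_dim_shift hm hS ω

lemma attractor_decomp (hm : ∀ i, 0 < m i) (hS : ∀ i j, IsBiLipContraction (S i j))
    {C₀ : ℝ} (hC₀ : 0 < C₀)
    (hdom : ∀ i j x y, dist (S i j x) (S i j y) ≤ C₀ * dist x y) :
    ∀ (k : ℕ) (ω : ℕ → Fin N), ∀ x ∈ attractorOf m S Set.univ ω,
      ∃ (φ : K → K) (a b : ℝ), 0 < a ∧ 0 < b ∧ b ≤ C₀^k ∧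
        (∀ y z, a * dist y z ≤ dist (φ y) (φ z) ∧ dist (φ y) (φ z) ≤ b * dist y z) ∧
        x ∈ φ '' attractorOf m S Set.univ ((fun (ω' : ℕ → Fin N) n => ω' (n+1))^[k] ω) ∧
        φ '' attractorOf m S Set.univ ((fun (ω' : ℕ → Fin N) n => ω' (n+1))^[k] ω)
          ⊆ attractorOf m S Set.univ ω := by
  intro k
  induction k with
  | zero =>
    intro ω x hx
    refine ⟨id, 1, 1, one_pos, one_pos, by rw [pow_zero], fun y z => by simp, ?_, ?_⟩
    · simpa using hx
    · simp
  | succ k ih =>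
    intro ω x hx
    rw [attractor_eq_union hm hS ω] at hx
    obtain ⟨j, hj⟩ := mem_iUnion.1 hx
    obtain ⟨y, hy, rfl⟩ := hj
    obtain ⟨ψ, a, b, ha, hb, hbC, hbd, hmem, hsub⟩ := ih (fun n => ω (n+1)) y hy
    obtain ⟨cij, Cij, hcij, hCij1, hbij⟩ := hS (ω 0) j
    refine ⟨S (ω 0) j ∘ ψ, cij * a, C₀ * b, mul_pos hcij ha, mul_pos hC₀ hb, ?_, ?_, ?_, ?_⟩
    · rw [pow_succ']
      exact mul_le_mul_of_nonneg_left hbC hC₀.le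
    · intro u v
      constructor
      · calc cij * a * dist u v = cij * (a * dist u v) := by ring
          _ ≤ cij * dist (ψ u) (ψ v) := mul_le_mul_of_nonneg_left (hbd u v).1 hcij.le
          _ ≤ dist (S (ω 0) j (ψ u)) (S (ω 0) j (ψ v)) := (hbij (ψ u) (ψ v)).1
      · calc dist (S (ω 0) j (ψ u)) (S (ω 0) j (ψ v)) ≤ C₀ * dist (ψ u) (ψ v) := hdom _ _ _ _
          _ ≤ C₀ * (b * dist u v) := mul_le_mul_of_nonneg_left (hbd u v).2 hC₀.le
          _ = C₀ * b * dist u v := by ring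
    · rw [Function.iterate_succ_apply, Set.image_comp]
      exact mem_image_of_mem _ hmem
    · rw [Function.iterate_succ_apply, Set.image_comp]
      refine Subset.trans (image_mono hsub) ?_
      rw [attractor_eq_union hm hS ω]
      exact subset_iUnion_of_subset j le_rfl

lemma attractor_ball_copy (hm : ∀ i, 0 < m i) (hS : ∀ i j, IsBiLipContraction (S i j))
    {C₀ : ℝ} (hC₀ : 0 < C₀) (hC₀1 : C₀ < 1)
    (hdom : ∀ i j x y, dist (S i j x) (S i j y) ≤ C₀ * dist x y)
    (ω : ℕ → Fin N) (x : K) (hx : x ∈ attractorOf m S Set.univ ω) {ρ : ℝ} (hρ : 0 < ρ) :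
    ∃ A : Set K, A ⊆ attractorOf m S Set.univ ω ∩ ball x ρ ∧ A.Nonempty ∧
      upperBoxDim A = upperBoxDim (attractorOf m S Set.univ ω) := by
  set D := Metric.diam (Set.univ : Set K) with hD
  have hDnn : 0 ≤ D := Metric.diam_nonneg
  obtain ⟨k, hk⟩ := exists_pow_lt_of_lt_one (show (0:ℝ) < ρ/(D+1) by positivity) hC₀1
  obtain ⟨φ, a, b, ha, hb, hbC, hbd, hmem, hsub⟩ :=
    attractor_decomp hm hS hC₀ hdom k ω x hx
  set A := φ '' attractorOf m S Set.univ ((fun (ω' : ℕ → Fin N) n => ω' (n+1))^[k] ω) with hA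
  have hxA : x ∈ A := hmem
  have hdiam : Metric.diam A ≤ b * D := by
    refine Metric.diam_le_of_forall_dist_le (by positivity) ?_
    rintro z ⟨u, -, rfl⟩ w ⟨v, -, rfl⟩
    refine (hbd u v).2.trans ?_
    exact mul_le_mul_of_nonneg_left
      (Metric.dist_le_diam_of_mem isBounded_of_compactSpace (mem_univ u) (mem_univ v)) hb.le
  refine ⟨A, ?_, (attractor_nonempty hm hS _).image φ, ?_⟩
  · intro z hz
    refine ⟨hsub hz, ?_⟩
    rw [mem_ball]
    have h1 : dist z x ≤ Metric.diam A :=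
      Metric.dist_le_diam_of_mem isBounded_of_compactSpace hz hxA
    have h2 : b * D ≤ C₀^k * D := mul_le_mul_of_nonneg_right hbC hDnn
    have h3 : C₀^k * D < ρ := by
      have h4 : C₀^k * (D+1) < (ρ/(D+1)) * (D+1) :=
        mul_lt_mul_of_pos_right hk (by positivity)
      rw [div_mul_cancel₀ ρ (by positivity)] at h4
      nlinarith [pow_pos hC₀ k]
    linarith
  · rw [hA, upperBoxDim_image_eq ha hb hbd]
    exact attractor_dim_iterate hm hS k ω

lemma exists_ball_subset_closure {F : Set K} (hF : IsCompact F) (hne : F.Nonempty)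
    (E : ℕ → Set K) (hcov : F ⊆ ⋃ n, E n) :
    ∃ (n : ℕ) (x : K) (ρ : ℝ), x ∈ F ∧ 0 < ρ ∧ F ∩ ball x ρ ⊆ closure (E n) := by
  have hcs : CompactSpace F := isCompact_iff_compactSpace.1 hF
  have hnon : Nonempty F := hne.to_subtype
  have hcl : ∀ n, IsClosed ((Subtype.val : F → K) ⁻¹' closure (E n)) :=
    fun n => isClosed_closure.preimage continuous_subtype_val
  have hcover : ⋃ n, ((Subtype.val : F → K) ⁻¹' closure (E n)) = univ := by
    ext z
    simp only [mem_iUnion, mem_univ, iff_true, mem_preimage]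
    obtain ⟨n, hn⟩ := mem_iUnion.1 (hcov z.2)
    exact ⟨n, subset_closure hn⟩
  obtain ⟨n, z, hz⟩ := (nonempty_interior_of_iUnion_of_closed hcl hcover).imp
    (fun n h => h)
  obtain ⟨ρ, hρ, hball⟩ := Metric.isOpen_iff.1 isOpen_interior z hz
  refine ⟨n, z.1, ρ, z.2, hρ, ?_⟩
  rintro y ⟨hyF, hyb⟩
  have hyz : (⟨y, hyF⟩ : F) ∈ ball z ρ := by
    rw [mem_ball, Subtype.dist_eq]
    exact mem_ball.1 hyb
  have hmem := interior_subset (hball hyz)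
  exact hmem

end attractor2

section packing
variable {K : Type*} [MetricSpace K]

lemma lt_dist_of_disjoint_closedBall {x y : K} {rx ry : ℝ} (hry : 0 ≤ ry)
    (h : Disjoint (Metric.closedBall x rx) (Metric.closedBall y ry)) : rx < dist x y := by
  by_contra hc
  push_neg at hc
  have hy1 : y ∈ Metric.closedBall x rx := by rwa [mem_closedBall, dist_comm]
  have hy2 : y ∈ Metric.closedBall y ry := mem_closedBall_self hry
  exact Set.disjoint_left.1 h hy1 hy2

lemma packingPre_empty (G : ℝ → ℝ) : packingPre G (∅ : Set K) = 0 := by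
  refine le_antisymm ?_ zero_le
  refine iInf₂_le_of_le 1 one_pos ?_
  refine iSup_le fun p => iSup_le fun c => iSup_le fun r => iSup_le fun hcond =>
    iSup_le fun _ => ?_
  rcases p.eq_empty_or_nonempty with rfl | ⟨n, hn⟩
  · simp [tsum_empty]
  · exact absurd (hcond n hn).1 (notMem_empty _)

lemma packingMeasure_le_pre (G : ℝ → ℝ) (F : Set K) :
    packingMeasure G F ≤ packingPre G F := by
  classical
  refine iInf₂_le_of_le (fun n => if n = 0 then F else ∅) (fun x hx => mem_iUnion.2 ⟨0, by simpa using hx⟩) ?_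
  have h1 : ∀ n : ℕ, packingPre G (if n = 0 then F else (∅ : Set K))
      = if n = 0 then packingPre G F else 0 := by
    intro n
    by_cases h : n = 0 <;> simp [h, packingPre_empty]
  calc ∑' n, packingPre G (if n = 0 then F else (∅ : Set K))
      = ∑' n : ℕ, if n = 0 then packingPre G F else 0 := tsum_congr h1
    _ = packingPre G F := tsum_ite_eq 0 _
    _ ≤ packingPre G F := le_rfl

/-- If the upper box dimension of `F` is `< s`, the `s`-packing pre-measure of `F` is finite. -/
lemma packingPre_ne_top_of_dim_lt [CompactSpace K] {F : Set K} {s : ℝ}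
    (h : upperBoxDim F < ENNReal.ofReal s) : packingPre (fun t => t ^ s) F ≠ ⊤ := by
  classical
  obtain ⟨t₀, ht₀0, hdt₀, ht₀s'⟩ := ENNReal.lt_iff_exists_real_btwn.1 h
  have ht₀s : t₀ < s := ofReal_lt_real_of_lt ht₀s'
  have hev := ev_coverNum_le hdt₀
  rw [eventually_nhdsWithin_iff] at hev
  obtain ⟨ε, hε, hevP⟩ := Metric.eventually_nhds_iff.1 hev
  set δ₁ : ℝ := min (ε/2) (1/2) with hδ₁def
  have hδ₁0 : 0 < δ₁ := by positivity
  have hδ₁1 : δ₁ < 1 := lt_of_le_of_lt (min_le_right _ _) (by norm_num)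
  have hP : ∀ δ : ℝ, 0 < δ → δ ≤ δ₁ → coverNum F δ ≤ ENNReal.ofReal (δ ^ (-t₀)) := by
    intro δ h0 h1
    refine hevP ?_ h0
    rw [Real.dist_eq, sub_zero, abs_of_pos h0]
    calc δ ≤ δ₁ := h1
      _ ≤ ε/2 := min_le_left _ _
      _ < ε := by linarith
  -- geometric scales
  set β : ℕ → ℝ := fun j => δ₁ * (2⁻¹:ℝ)^j with hβdef
  have hβpos : ∀ j, 0 < β j := fun j => mul_pos hδ₁0 (by positivity)
  have hβle : ∀ j, β j ≤ δ₁ := by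
    intro j
    have h1 : (2⁻¹:ℝ)^j ≤ 1 := pow_le_one₀ (by norm_num) (by norm_num)
    have h2 : δ₁ * (2⁻¹:ℝ)^j ≤ δ₁ * 1 := mul_le_mul_of_nonneg_left h1 hδ₁0.le
    simpa [hβdef] using h2
  have hβsucc : ∀ j, β (j+1) = β j * 2⁻¹ := by
    intro j; rw [hβdef]; ring
  -- the dominating series
  set q : ℝ := (2⁻¹:ℝ) ^ (s - t₀) with hqdef
  have hq0 : 0 < q := Real.rpow_pos_of_pos (by norm_num) _
  have hq1 : q < 1 := Real.rpow_lt_one (by norm_num) (by norm_num) (by linarith)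
  set Cc : ℝ := δ₁ ^ (s - t₀) * (8:ℝ) ^ t₀ with hCcdef
  have hCc0 : 0 ≤ Cc := by positivity
  set Bfun : ℕ → ℝ≥0∞ := fun j => ENNReal.ofReal ((β j / 8) ^ (-t₀) * β j ^ s) with hBfdef
  have hBval : ∀ j, Bfun j = ENNReal.ofReal Cc * (ENNReal.ofReal q)^j := by
    intro j
    have h8 : (β j / 8) ^ (-t₀) = β j ^ (-t₀) * (8:ℝ) ^ t₀ := by
      rw [Real.div_rpow (hβpos j).le (by norm_num : (0:ℝ) ≤ 8),
        Real.rpow_neg (by norm_num : (0:ℝ) ≤ 8), div_eq_mul_inv, inv_inv]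
    have hmain : (β j / 8) ^ (-t₀) * β j ^ s = Cc * q^j := by
      rw [h8]
      have h2 : β j ^ (-t₀) * β j ^ s = β j ^ (s - t₀) := by
        rw [← Real.rpow_add (hβpos j)]; ring_nf
      have h3 : β j ^ (s - t₀) = δ₁ ^ (s-t₀) * q^j := by
        rw [hβdef, Real.mul_rpow hδ₁0.le (by positivity)]
        congr 1
        rw [← Real.rpow_natCast (2⁻¹:ℝ) j, ← Real.rpow_mul (by norm_num : (0:ℝ) ≤ 2⁻¹),
          mul_comm (j:ℝ), Real.rpow_mul (by norm_num : (0:ℝ) ≤ 2⁻¹), Real.rpow_natCast]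
      calc β j ^ (-t₀) * (8:ℝ)^t₀ * β j ^ s = β j ^ (-t₀) * β j ^ s * (8:ℝ)^t₀ := by ring
        _ = β j ^ (s - t₀) * (8:ℝ)^t₀ := by rw [h2]
        _ = δ₁ ^ (s-t₀) * q^j * (8:ℝ)^t₀ := by rw [h3]
        _ = Cc * q^j := by rw [hCcdef]; ring
    rw [hBfdef]
    simp only []
    rw [hmain, ENNReal.ofReal_mul hCc0, ENNReal.ofReal_pow hq0.le]
  have hBsum : ∑' j, Bfun j < ⊤ := by
    have : ∑' j, Bfun j = ENNReal.ofReal Cc * ∑' j, (ENNReal.ofReal q)^j := by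
      rw [← ENNReal.tsum_mul_left]; exact tsum_congr hBval
    rw [this, ENNReal.tsum_geometric]
    refine ENNReal.mul_lt_top ENNReal.ofReal_lt_top ?_
    rw [ENNReal.inv_lt_top]
    rw [tsub_pos_iff_lt]
    exact lt_of_lt_of_le (by exact_mod_cast ENNReal.ofReal_lt_one.2 hq1) le_rfl
  -- bound the pre-measure by the value at δ₁
  intro htop
  have hle : packingPre (fun t => t ^ s) F ≤ ∑' j, Bfun j := by
    rw [packingPre]
    refine iInf₂_le_of_le δ₁ hδ₁0 ?_
    refine iSup_le fun p => iSup_le fun c => iSup_le fun r => iSup_le fun hcond =>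
      iSup_le fun hdisj => ?_
    -- decompose the packing by scales
    set Aset : ℕ → Set ℕ := fun j => {n | n ∈ p ∧ β (j+1) < 2 * r n ∧ 2 * r n ≤ β j}
      with hAdef
    have hsub : p ⊆ ⋃ j, Aset j := by
      intro n hn
      obtain ⟨-, hr0, hrδ⟩ := hcond n hn
      have hex : ∃ j, β j < 2 * r n := by
        obtain ⟨jj, hjj⟩ := exists_pow_lt_of_lt_one
          (show (0:ℝ) < 2 * r n / δ₁ by positivity) (show (2⁻¹:ℝ) < 1 by norm_num)
        refine ⟨jj, ?_⟩
        rw [hβdef]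
        calc δ₁ * (2⁻¹:ℝ)^jj < δ₁ * (2 * r n / δ₁) :=
              mul_lt_mul_of_pos_left hjj hδ₁0
          _ = 2 * r n := by field_simp
      have hne0 : Nat.find hex ≠ 0 := by
        intro h0
        have := Nat.find_spec hex
        rw [h0] at this
        simp only [hβdef, pow_zero, mul_one] at this
        linarith
      obtain ⟨jf, hjf⟩ := Nat.exists_eq_succ_of_ne_zero hne0
      refine mem_iUnion.2 ⟨jf, hn, ?_, ?_⟩
      · have := Nat.find_spec hex
        rwa [hjf] at this
      · have := Nat.find_min hex (m := jf) (by omega)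
        push_neg at this
        exact this
    have hstep : ∀ j : ℕ, ∑' n : Aset j, ENNReal.ofReal ((2 * r (n:ℕ)) ^ s) ≤ Bfun j := by
      intro j
      -- the centers are (β j / 4)-separated and lie in F
      set ρ : ℝ := β (j+1) / 2 with hρdef
      have hρ0 : 0 < ρ := by have := hβpos (j+1); positivity
      have hρβ : ρ = β j / 4 := by rw [hρdef, hβsucc]; ring
      have hsep : ∀ n ∈ Aset j, ∀ n' ∈ Aset j, n ≠ n' → ρ ≤ dist (c n) (c n') := by
        intro n hn n' hn' hne
        have hd := hdisj hn.1 hn'.1 hne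
        have hr' : 0 ≤ r n' := (hcond n' hn'.1).2.1.le
        have := lt_dist_of_disjoint_closedBall hr' hd
        have h2 : β (j+1) < 2 * r n := hn.2.1
        linarith
      have hinj : ∀ n ∈ Aset j, ∀ n' ∈ Aset j, c n = c n' → n = n' := by
        intro n hn n' hn' hcc
        by_contra hne
        have := hsep n hn n' hn' hne
        rw [hcc, dist_self] at this
        linarith
      -- finiteness of Aset j
      have hfin : (Aset j).Finite := by
        by_contra hinf
        replace hinf : (Aset j).Infinite := hinf
        have hcI : (c '' Aset j).Infinite := by
          intro hfin2
          exact hinf (Set.Finite.of_finite_image hfin2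
            (fun a ha b hb hab => hinj a ha b hb hab))
        have hbnd := coverNum_lt_top F (show (0:ℝ) < ρ/2 by positivity)
        obtain ⟨Bn, hBn⟩ := ENNReal.exists_nat_gt hbnd.ne
        obtain ⟨T', hT'sub, hT'card⟩ := hcI.exists_subset_card_eq (Bn + 1)
        have hTF : ↑T' ⊆ F := by
          intro z hz
          obtain ⟨n, hn, rfl⟩ := hT'sub hz
          exact (hcond n hn.1).1
        have hT'sep : ∀ x ∈ T', ∀ y ∈ T', x ≠ y → ρ ≤ dist x y := by
          intro x hx y hy hxy
          obtain ⟨n, hn, rfl⟩ := hT'sub hx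
          obtain ⟨n', hn', rfl⟩ := hT'sub hy
          exact hsep n hn n' hn' (fun h => hxy (by rw [h]))
        have hcc := card_le_coverNum hTF hT'sep (show ρ/2 < ρ by linarith)
        rw [hT'card] at hcc
        have hlt : ((Bn+1:ℕ) : ℝ≥0∞) < ((Bn:ℕ) : ℝ≥0∞) := lt_of_le_of_lt hcc hBn
        have : (Bn+1:ℕ) < Bn := by exact_mod_cast hlt
        omega
      -- the cardinality bound
      haveI := hfin.fintype
      have hTcard : (Fintype.card (Aset j) : ℝ≥0∞) ≤ ENNReal.ofReal ((β j / 8) ^ (-t₀)) := by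
        set Tf : Finset K := Finset.image (fun n : ℕ => c n) hfin.toFinset with hTfdef
        have hTfcard : Tf.card = Fintype.card (Aset j) := by
          rw [hTfdef, Finset.card_image_of_injOn (fun a ha b hb hab =>
            hinj a (by simpa using ha) b (by simpa using hb) hab)]
          simp [Set.Finite.card_toFinset]
        have hTfF : ↑Tf ⊆ F := by
          intro z hz
          simp only [hTfdef, Finset.coe_image, Set.Finite.coe_toFinset] at hz
          obtain ⟨n, hn, rfl⟩ := hz
          exact (hcond n hn.1).1
        have hTfsep : ∀ x ∈ Tf, ∀ y ∈ Tf, x ≠ y → ρ ≤ dist x y := by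
          intro x hx y hy hxy
          simp only [hTfdef, Finset.mem_image, Set.Finite.mem_toFinset] at hx hy
          obtain ⟨n, hn, rfl⟩ := hx
          obtain ⟨n', hn', rfl⟩ := hy
          exact hsep n hn n' hn' (fun h => hxy (by rw [h]))
        have h1 := card_le_coverNum hTfF hTfsep (show ρ/2 < ρ by linarith)
        have h2 : coverNum F (ρ/2) ≤ ENNReal.ofReal ((ρ/2) ^ (-t₀)) := by
          refine hP _ (by positivity) ?_
          rw [hρβ]
          have := hβle j
          linarith [hβpos j]
        have h3 : ρ/2 = β j / 8 := by rw [hρβ]; ring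
        rw [← hTfcard, ← h3]
        exact h1.trans h2
      calc ∑' n : Aset j, ENNReal.ofReal ((2 * r (n:ℕ)) ^ s)
          = ∑ n : Aset j, ENNReal.ofReal ((2 * r (n:ℕ)) ^ s) := tsum_fintype _
        _ ≤ ∑ _n : Aset j, ENNReal.ofReal (β j ^ s) := by
            refine Finset.sum_le_sum fun n _ => ENNReal.ofReal_le_ofReal ?_
            refine Real.rpow_le_rpow ?_ n.2.2.2 (by linarith)
            have := (hcond n n.2.1).2.1
            linarith
        _ = (Fintype.card (Aset j)) • ENNReal.ofReal (β j ^ s) := by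
            rw [Finset.sum_const, Finset.card_univ]
        _ = (Fintype.card (Aset j) : ℝ≥0∞) * ENNReal.ofReal (β j ^ s) := by
            rw [nsmul_eq_mul]
        _ ≤ ENNReal.ofReal ((β j / 8) ^ (-t₀)) * ENNReal.ofReal (β j ^ s) :=
            mul_le_mul_left hTcard _
        _ = Bfun j := by
            rw [hBfdef]
            simp only []
            rw [ENNReal.ofReal_mul (Real.rpow_nonneg (by positivity) _)]
    calc ∑' n : p, ENNReal.ofReal ((2 * r (n:ℕ)) ^ s)
        ≤ ∑' n : (⋃ j, Aset j), ENNReal.ofReal ((2 * r (n:ℕ)) ^ s) :=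
          ENNReal.tsum_mono_subtype (fun n => ENNReal.ofReal ((2 * r n) ^ s)) hsub
      _ ≤ ∑' j, ∑' n : Aset j, ENNReal.ofReal ((2 * r (n:ℕ)) ^ s) :=
          ENNReal.tsum_iUnion_le_tsum (fun n => ENNReal.ofReal ((2 * r n) ^ s)) Aset
      _ ≤ ∑' j, Bfun j := ENNReal.tsum_le_tsum hstep
  rw [htop] at hle
  exact absurd (top_le_iff.1 hle) hBsum.ne
end packing

section packingtop
variable {K : Type*} [MetricSpace K]

lemma packingPre_eq_top_of_subset_closure [CompactSpace K] {E A : Set K} {s : ℝ} (hs : 0 ≤ s)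
    (hA : A ⊆ closure E) (hAne : A.Nonempty) (hdim : ENNReal.ofReal s < upperBoxDim A) :
    packingPre (fun t => t ^ s) E = ⊤ := by
  classical
  obtain ⟨s', hs'0, hss'E, hs'd⟩ := ENNReal.lt_iff_exists_real_btwn.1 hdim
  have hss' : s < s' := ofReal_lt_real_of_lt hss'E
  have hfreq := freq_le_coverNum hs'0 hs'd
  rw [packingPre, iInf_eq_top]
  intro δ
  rw [iInf_eq_top]
  intro hδ
  rw [eq_top_iff, ← ENNReal.iSup_natCast]
  refine iSup_le fun M => ?_
  have ha : 0 < s' - s := by linarith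
  have hg : Filter.Tendsto (fun x : ℝ => (8:ℝ)^(-s) * x ^ (-(s'-s)))
      (nhdsWithin 0 (Set.Ioi 0)) Filter.atTop :=
    Filter.Tendsto.const_mul_atTop (Real.rpow_pos_of_pos (by norm_num) _)
      (tendsto_rpow_neg_zero ha)
  have hgev := hg.eventually_ge_atTop (M:ℝ)
  have hsmall : ∀ᶠ x : ℝ in nhdsWithin 0 (Set.Ioi 0), x < 8*δ := by
    filter_upwards [Ioo_mem_nhdsGT
      (by linarith : (0:ℝ) < 8*δ)] with x hx
    exact hx.2
  obtain ⟨δh, hδhN, ⟨hδhM, hδhsm⟩, hδhpos'⟩ :=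
    (hfreq.and_eventually ((hgev.and hsmall).and eventually_mem_nhdsWithin)).exists
  have hδhpos : 0 < δh := hδhpos'
  set ρ : ℝ := δh/2 with hρdef
  have hρ0 : 0 < ρ := by positivity
  obtain ⟨T, hTA, hTsep, hTbig⟩ := exists_separated hAne hρ0
  have h2ρ : 2*ρ = δh := by rw [hρdef]; ring
  have hTlow : ENNReal.ofReal (δh ^ (-s')) ≤ (T.card:ℝ≥0∞) := by
    refine le_trans hδhN ?_
    refine le_trans (le_of_eq ?_) hTbig
    rw [h2ρ]
  have hTc : ∀ t : {t // t ∈ T}, ∃ e, e ∈ E ∧ dist (t:K) e < ρ/8 := fun t =>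
    Metric.mem_closure_iff.1 (hA (hTA t.2)) _ (by positivity)
  choose et hetE hetd using hTc
  set cP : ℕ → K := fun n => if h : n < T.card then et (T.equivFin.symm ⟨n, h⟩) else hAne.some
    with hcPdef
  set rP : ℕ → ℝ := fun _ => ρ/8 with hrPdef
  set sP : Set ℕ := ↑(Finset.range T.card) with hsPdef
  have hmemsP : ∀ n, n ∈ sP ↔ n < T.card := fun n => by
    rw [hsPdef, Finset.mem_coe, Finset.mem_range]
  have hcond : ∀ n ∈ sP, cP n ∈ E ∧ 0 < rP n ∧ 2 * rP n ≤ δ := by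
    intro n hn
    rw [hmemsP] at hn
    refine ⟨?_, by positivity, ?_⟩
    · rw [hcPdef]; simp only [dif_pos hn]; exact hetE _
    · rw [hrPdef]
      simp only []
      rw [hρdef]
      linarith
  have hdisj : sP.PairwiseDisjoint (fun n => Metric.closedBall (cP n) (rP n)) := by
    intro n hn n' hn' hne
    rw [hmemsP] at hn hn'
    set t1 := T.equivFin.symm ⟨n, hn⟩ with ht1
    set t2 := T.equivFin.symm ⟨n', hn'⟩ with ht2
    have ht12 : (t1:K) ≠ (t2:K) := by
      intro hcc
      apply hne
      have h12 : t1 = t2 := Subtype.ext hcc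
      have := congrArg T.equivFin h12
      rw [Equiv.apply_symm_apply, Equiv.apply_symm_apply] at this
      exact congrArg Fin.val this
    have hsep12 : ρ ≤ dist (t1:K) (t2:K) := hTsep _ t1.2 _ t2.2 ht12
    have hd1 : dist (t1:K) (et t1) < ρ/8 := hetd t1
    have hd2 : dist (t2:K) (et t2) < ρ/8 := hetd t2
    have htri : dist (t1:K) (t2:K) ≤ dist (t1:K) (et t1) + dist (et t1) (et t2)
        + dist (et t2) (t2:K) := dist_triangle4 _ _ _ _
    rw [dist_comm (et t2) (t2:K)] at htri
    have hdist : 3*ρ/4 ≤ dist (et t1) (et t2) := by linarith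
    have hcPn : cP n = et t1 := by rw [hcPdef]; simp only [dif_pos hn, ht1]
    have hcPn' : cP n' = et t2 := by rw [hcPdef]; simp only [dif_pos hn', ht2]
    refine closedBall_disjoint_closedBall ?_
    rw [hcPn, hcPn', hrPdef]
    simp only []
    linarith
  have hcardeq : (Fintype.card sP : ℝ≥0∞) = (T.card : ℝ≥0∞) := by
    have h1 : Fintype.card sP = (Finset.range T.card).card :=
      Fintype.card_of_finset' (Finset.range T.card) (fun x => by rw [hmemsP, Finset.mem_range])
    rw [h1, Finset.card_range]
  have hsum : (M:ℝ≥0∞) ≤ ∑' n : sP, ENNReal.ofReal ((fun t => t ^ s) (2 * rP (n:ℕ))) := by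
    have hconst : ∑' n : sP, ENNReal.ofReal ((fun t => t ^ s) (2 * rP (n:ℕ)))
        = (Fintype.card sP : ℝ≥0∞) * ENNReal.ofReal ((ρ/4)^s) := by
      rw [tsum_fintype]
      have : ∀ n : sP, ENNReal.ofReal ((fun t => t ^ s) (2 * rP (n:ℕ)))
          = ENNReal.ofReal ((ρ/4)^s) := by
        intro n
        rw [hrPdef]
        simp only []
        rw [show 2*(ρ/8) = ρ/4 by ring]
      rw [Finset.sum_congr rfl (fun n _ => this n), Finset.sum_const, Finset.card_univ,
        nsmul_eq_mul]
    rw [hconst, hcardeq]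
    have hreal : (8:ℝ)^(-s) * δh ^ (-(s'-s)) = δh^(-s') * (δh/8)^s := by
      rw [Real.div_rpow hδhpos.le (by norm_num : (0:ℝ) ≤ 8)]
      have h1 : δh ^ (-(s'-s)) = δh^(-s') * δh^s := by
        rw [← Real.rpow_add hδhpos]; ring_nf
      rw [h1, Real.rpow_neg (by norm_num : (0:ℝ) ≤ 8)]
      field_simp
    have hρ4 : δh/8 = ρ/4 := by rw [hρdef]; ring
    calc (M:ℝ≥0∞) = ENNReal.ofReal (M:ℝ) := by rw [ENNReal.ofReal_natCast]
      _ ≤ ENNReal.ofReal ((8:ℝ)^(-s) * δh ^ (-(s'-s))) := ENNReal.ofReal_le_ofReal hδhM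
      _ = ENNReal.ofReal (δh^(-s') * (δh/8)^s) := by rw [hreal]
      _ = ENNReal.ofReal (δh^(-s')) * ENNReal.ofReal ((δh/8)^s) :=
          ENNReal.ofReal_mul (Real.rpow_nonneg hδhpos.le _)
      _ ≤ (T.card : ℝ≥0∞) * ENNReal.ofReal ((δh/8)^s) := mul_le_mul_left hTlow _
      _ = (T.card : ℝ≥0∞) * ENNReal.ofReal ((ρ/4)^s) := by rw [hρ4]
  refine le_trans hsum ?_
  exact le_iSup_of_le sP (le_iSup_of_le cP (le_iSup_of_le rP
    (le_iSup_of_le hcond (le_iSup_of_le hdisj le_rfl))))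
end packingtop

section assembly
variable {K : Type*} [MetricSpace K]

lemma packingDim_le_upperBoxDim [CompactSpace K] (F : Set K) :
    packingDim F ≤ upperBoxDim F := by
  rw [packingDim]
  refine iSup_le fun s => iSup_le fun hs => iSup_le fun htop => ?_
  by_contra hlt
  push_neg at hlt
  have h1 := packingPre_ne_top_of_dim_lt hlt
  have h2 : packingMeasure (fun t => t ^ s) F ≠ ⊤ := fun h =>
    h1 (top_le_iff.1 (h ▸ packingMeasure_le_pre (fun t => t ^ s) F))
  exact h2 htop
end assembly

theorem packingDim_eq_upperBoxDim_attractor' {K : Type*} [MetricSpace K] [CompactSpace K]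
    [Nonempty K]
    {N : ℕ} (hN : 0 < N) (m : Fin N → ℕ) (hm : ∀ i, 0 < m i)
    (S : ∀ i, Fin (m i) → K → K) (hS : ∀ i j, IsBiLipContraction (S i j)) :
    ∀ ω : ℕ → Fin N,
      packingDim (attractorOf m S Set.univ ω) = upperBoxDim (attractorOf m S Set.univ ω) := by
  classical
  have hNE : Nonempty ((i : Fin N) × Fin (m i)) := ⟨⟨⟨0, hN⟩, ⟨0, hm _⟩⟩⟩
  choose c C hc hC1 hb using hS
  set C₀ : ℝ := max (1/2)
    (Finset.univ.sup' Finset.univ_nonempty (fun p : (i : Fin N) × Fin (m i) => C p.1 p.2))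
    with hC₀def
  have hC₀pos : 0 < C₀ := lt_of_lt_of_le (by norm_num) (le_max_left _ _)
  have hC₀1 : C₀ < 1 := by
    rw [hC₀def]
    refine max_lt (by norm_num) ?_
    rw [Finset.sup'_lt_iff]
    exact fun p _ => hC1 p.1 p.2
  have hdom : ∀ i j x y, dist (S i j x) (S i j y) ≤ C₀ * dist x y := by
    intro i j x y
    refine ((hb i j x y).2).trans ?_
    refine mul_le_mul_of_nonneg_right ?_ dist_nonneg
    refine le_trans ?_ (le_max_right _ _)
    exact Finset.le_sup' (fun p : (i : Fin N) × Fin (m i) => C p.1 p.2)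
      (Finset.mem_univ ⟨i, j⟩)
  have hS' : ∀ i j, IsBiLipContraction (S i j) := fun i j => ⟨c i j, C i j, hc i j, hC1 i j, hb i j⟩
  intro ω
  set F := attractorOf m S Set.univ ω with hFdef
  refine le_antisymm (packingDim_le_upperBoxDim F) ?_
  have key : ∀ s : ℝ, 0 ≤ s → ENNReal.ofReal s < upperBoxDim F →
      packingMeasure (fun t => t^s) F = ⊤ := by
    intro s hs hlt
    rw [packingMeasure, iInf_eq_top]
    intro E
    rw [iInf_eq_top]
    intro hcov
    obtain ⟨n, x, ρ, hxF, hρ, hball⟩ := exists_ball_subset_closure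
      (attractor_isCompact hS' ω) (attractor_nonempty hm hS' ω) E hcov
    obtain ⟨A, hAsub, hAne, hAdim⟩ :=
      attractor_ball_copy hm hS' hC₀pos hC₀1 hdom ω x hxF hρ
    have hAcl : A ⊆ closure (E n) := fun z hz => hball ⟨(hAsub hz).1, (hAsub hz).2⟩
    have htop := packingPre_eq_top_of_subset_closure hs hAcl hAne (by rw [hAdim]; exact hlt)
    have hle := ENNReal.le_tsum (f := fun k => packingPre (fun t => t^s) (E k)) n
    rw [htop] at hle
    exact top_unique hle
  by_contra hlt
  push_neg at hlt
  obtain ⟨s, hs0, h1, h2⟩ := ENNReal.lt_iff_exists_real_btwn.1 hlt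
  have hms := key s hs0 h2
  have hle : ENNReal.ofReal s ≤ packingDim F := by
    rw [packingDim]
    exact le_iSup_of_le s (le_iSup_of_le hs0 (le_iSup_of_le hms le_rfl))
  exact absurd (lt_of_le_of_lt hle h1) (lt_irrefl _)


/-- For every `ω`, the packing dimension and the upper box dimension of the random
attractor `F_ω` coincide. -/
theorem packingDim_eq_upperBoxDim_attractor {K : Type*} [MetricSpace K] [CompactSpace K] [Nonempty K]
    {N : ℕ} (hN : 0 < N) (m : Fin N → ℕ) (hm : ∀ i, 0 < m i)
    (S : ∀ i, Fin (m i) → K → K) (hS : ∀ i j, IsBiLipContraction (S i j)) :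
    ∀ ω : ℕ → Fin N,
      packingDim (attractorOf m S Set.univ ω) = upperBoxDim (attractorOf m S Set.univ ω) :=
  packingDim_eq_upperBoxDim_attractor' hN m hm S hS
end
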